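/- arXiv:1605.09099 — 3 statements merged into one kernel-verified Lean document; each statement's English description precedes it below -/
import Mathlib

section
/- Let e be a degree one edge of a triangulation, T the unique (model) tetrahedron incident to e, and e′ the edge of T opposite e. Then: (i) the only 3-2 move whose three tetrahedra include T is the 3-2 move performed along e′, and it is possible only when e′ has degree three with its other two incident tetrahedra distinct from T and from each other; (ii) the only 2-3 moves involving T are those performed on one of the two faces of T not incident to e, and the two choices give the same configuration up to symmetry. Consequently there are exactly two local ways in which a degree one edge can be created: one via a 2-3 move (the reverse of (i)) in which the two tetrahedra before the move are distinct, and one via a 3-2 move (the reverse of (ii)) in which the three tetrahedra before the move are distinct. -/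
/-!
Formalization framework for triangulations of three-manifolds
(Matveev/Piergallini-style triangulations, following Wheeler,
"Connectivity of triangulations without degree one edges under 2-3 and 3-2 moves").

A triangulation is a finite family of oriented model tetrahedra together with
orientation-reversing face pairings; no face is glued to itself, faces may be left
unglued (boundary faces).  The face of a model tetrahedron opposite vertex `i` is
labelled `i`; a pairing of face `(t, i)` with face `(t', i')` is recorded together
with the induced simplicial vertex correspondence, extended to a permutation
`σ` of `Fin 4` with `σ i = i'`.  Since all model tetrahedra are identically
oriented, a face pairing is orientation-reversing exactly when `σ` is odd.
-/

namespace Paper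

open Equiv

structure Tri : Type 1 where
  ι : Type
  fin : Fintype ι
  dec : DecidableEq ι
  glue : ι × Fin 4 → Option ((ι × Fin 4) × Perm (Fin 4))
  glue_ne : ∀ F P, glue F = some P → P.1 ≠ F
  glue_symm : ∀ F F' σ, glue F = some (F', σ) → glue F' = some (F, σ⁻¹)
  glue_vertex : ∀ F F' σ, glue F = some (F', σ) → σ F.2 = F'.2
  glue_orient : ∀ F F' σ, glue F = some (F', σ) → Perm.sign σ = -1

attribute [instance] Tri.fin Tri.dec

/-- Every face is paired with another face (the complex has no boundary). -/
def Tri.Boundaryless (T : Tri) : Prop := ∀ F, T.glue F ≠ none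

/-- An unordered pair of distinct vertex labels of a model tetrahedron. -/
def EdgePair : Type := {s : Finset (Fin 4) // s.card = 2}

def epair (a b : Fin 4) (h : a ≠ b) : EdgePair := ⟨{a, b}, Finset.card_pair h⟩

def EdgePair.map (s : EdgePair) (π : Perm (Fin 4)) : EdgePair :=
  ⟨s.1.image π, by rw [Finset.card_image_of_injective _ π.injective, s.2]⟩

/-- A model edge: a model tetrahedron together with a pair of its vertices. -/
def Tri.ModelEdge (T : Tri) : Type := T.ι × EdgePair

/-- Two model edges are identified across a single face pairing. -/
def Tri.edgeAdj (T : Tri) : T.ModelEdge → T.ModelEdge → Prop := fun e f =>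
  ∃ (i : Fin 4) (G : T.ι × Fin 4) (σ : Perm (Fin 4)),
    i ∉ e.2.1 ∧ T.glue (e.1, i) = some (G, σ) ∧ f.1 = G.1 ∧ f.2.1 = e.2.1.image σ

/-- Edges of the triangulation: classes of model edges under the identifications. -/
def Tri.EdgeClass (T : Tri) : Type := Quot T.edgeAdj

def Tri.edgeOf (T : Tri) (e : T.ModelEdge) : T.EdgeClass := Quot.mk _ e

/-- The degree of an edge of the triangulation: the number of model edges
identified to form it. -/
noncomputable def Tri.degree (T : Tri) (E : T.EdgeClass) : ℕ :=
  Nat.card {e : T.ModelEdge // T.edgeOf e = E}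

def Tri.HasDegOneEdge (T : Tri) : Prop := ∃ e : T.ModelEdge, T.degree (T.edgeOf e) = 1

/-- An edge lying in an unglued (boundary) face. -/
def Tri.IsBoundaryEdge (T : Tri) (E : T.EdgeClass) : Prop :=
  ∃ (f : T.ModelEdge) (i : Fin 4), T.edgeOf f = E ∧ i ∉ f.2.1 ∧ T.glue (f.1, i) = none

/-- Identification of model vertices across a single face pairing. -/
def Tri.vertAdj (T : Tri) : T.ι × Fin 4 → T.ι × Fin 4 → Prop := fun v w =>
  ∃ (i : Fin 4) (G : T.ι × Fin 4) (σ : Perm (Fin 4)),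
    i ≠ v.2 ∧ T.glue (v.1, i) = some (G, σ) ∧ w = (G.1, σ v.2)

def Tri.VertClass (T : Tri) : Type := Quot T.vertAdj

noncomputable def Tri.vertexCount (T : Tri) : ℕ := Nat.card T.VertClass

/-! ### The underlying topological space -/

instance (T : Tri) : TopologicalSpace T.ι := ⊥

def Tri.Pt (T : Tri) : Type := T.ι × (stdSimplex ℝ (Fin 4))

instance (T : Tri) : TopologicalSpace T.Pt :=
  inferInstanceAs (TopologicalSpace (T.ι × (stdSimplex ℝ (Fin 4))))

/-- Identification of points of the disjoint union of the model tetrahedra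
(in barycentric coordinates) induced by a face pairing. -/
def Tri.spaceRel (T : Tri) : T.Pt → T.Pt → Prop := fun p q =>
  ∃ (i : Fin 4) (G : T.ι × Fin 4) (σ : Perm (Fin 4)),
    T.glue (p.1, i) = some (G, σ) ∧ (p.2 : Fin 4 → ℝ) i = 0 ∧
    q.1 = G.1 ∧ (q.2 : Fin 4 → ℝ) = (p.2 : Fin 4 → ℝ) ∘ ⇑σ.symm

/-- The underlying space of the triangulation. -/
def Tri.Space (T : Tri) : Type := Quot T.spaceRel

instance (T : Tri) : TopologicalSpace T.Space :=
  inferInstanceAs (TopologicalSpace (Quot T.spaceRel))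

def vpoint (v : Fin 4) : stdSimplex ℝ (Fin 4) :=
  ⟨fun j => if j = v then 1 else 0, by
    refine ⟨fun j => ?_, by simp⟩
    dsimp only; split <;> norm_num⟩

def Tri.IsVertexPoint (T : Tri) (x : T.Space) : Prop :=
  ∃ (t : T.ι) (v : Fin 4), x = Quot.mk _ (t, vpoint v)

/-- The underlying space of the associated ideal triangulation: the space with
the vertices removed. -/
def Tri.IdealSpace (T : Tri) : Type := {x : T.Space // ¬ T.IsVertexPoint x}

instance (T : Tri) : TopologicalSpace T.IdealSpace :=
  inferInstanceAs (TopologicalSpace {x : T.Space // ¬ T.IsVertexPoint x})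

/-- The link of a vertex of the triangulation, realized as the union of the
cross-section triangles at barycentric height `3/4` towards that vertex. -/
def Tri.link (T : Tri) (V : T.VertClass) : Set T.Space :=
  {x | ∃ (t : T.ι) (v : Fin 4) (p : stdSimplex ℝ (Fin 4)),
      Quot.mk T.vertAdj (t, v) = V ∧ (p : Fin 4 → ℝ) v = 3/4 ∧ x = Quot.mk _ (t, p)}

noncomputable def Sphere2 : Type := Metric.sphere (0 : EuclideanSpace ℝ (Fin 3)) 1

noncomputable instance : TopologicalSpace Sphere2 :=
  inferInstanceAs (TopologicalSpace (Metric.sphere (0 : EuclideanSpace ℝ (Fin 3)) 1))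

def Tri.HasSphericalLink (T : Tri) (V : T.VertClass) : Prop :=
  Nonempty (T.link V ≃ₜ Sphere2)

/-! ### Canonical permutations -/

def p23 : Perm (Fin 4) := Equiv.swap 2 3
def p01 : Perm (Fin 4) := Equiv.swap 0 1
/-- the `3`-cycle `(1 3 2)` -/
def c132 : Perm (Fin 4) := Equiv.swap 1 3 * Equiv.swap 3 2
/-- the `3`-cycle `(1 2 3)` -/
def c123 : Perm (Fin 4) := Equiv.swap 1 2 * Equiv.swap 2 3
/-- the permutation `(0 1)(2 3)` -/
def c01x23 : Perm (Fin 4) := Equiv.swap 0 1 * Equiv.swap 2 3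
/-- the `3`-cycle `(0 1 2)` -/
def c012 : Perm (Fin 4) := Equiv.swap 0 1 * Equiv.swap 1 2
/-- the `3`-cycle `(0 1 3)` -/
def c013 : Perm (Fin 4) := Equiv.swap 0 1 * Equiv.swap 1 3
/-- the `4`-cycle `(0 3 1 2)` -/
def aV : Perm (Fin 4) := Equiv.swap 0 3 * Equiv.swap 3 1 * Equiv.swap 1 2
/-- the permutation `(0 3)(1 2)` -/
def gV : Perm (Fin 4) := Equiv.swap 0 3 * Equiv.swap 1 2

/-! ### The 2-3 move

A 2-3 move replaces two distinct model tetrahedra `tA, tB` of `T`, glued to each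
other along a face, by three model tetrahedra `tP, tQ, tR` of `T'` arranged around
a new edge joining the two vertices (apexes) of `tA`, `tB` not on the shared face.
`πA, …, πR` record (orientation-preserving) identifications of the model tetrahedra
involved with the labelled tetrahedra of the canonical local picture of the move:
for `tA` the apex is vertex `πA 0` and the shared face is `(tA, πA 0)`; the new
central edge of `T'` is the edge `{πP 0, πP 1}` of `tP`.  The data `ρ, μ, Φ, τ`
record how the tetrahedra, faces and face pairings away from the move are carried
from `T` to `T'`. -/

structure Move23 (T T' : Tri) : Type where
  tA : T.ι
  tB : T.ι
  hAB : tA ≠ tB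
  πA : Perm (Fin 4)
  πB : Perm (Fin 4)
  hsA : Perm.sign πA = 1
  hsB : Perm.sign πB = 1
  hglue : T.glue (tA, πA 0) = some ((tB, πB 0), πB * p23 * πA⁻¹)
  tP : T'.ι
  tQ : T'.ι
  tR : T'.ι
  hPQ : tP ≠ tQ
  hPR : tP ≠ tR
  hQR : tQ ≠ tR
  πP : Perm (Fin 4)
  πQ : Perm (Fin 4)
  πR : Perm (Fin 4)
  hsP : Perm.sign πP = 1
  hsQ : Perm.sign πQ = 1
  hsR : Perm.sign πR = 1
  hPQglue : T'.glue (tP, πP 2) = some ((tQ, πQ 3), πQ * p23 * πP⁻¹)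
  hQRglue : T'.glue (tQ, πQ 2) = some ((tR, πR 3), πR * p23 * πQ⁻¹)
  hRPglue : T'.glue (tR, πR 2) = some ((tP, πP 3), πP * p23 * πR⁻¹)
  ρ : {t : T.ι // t ≠ tA ∧ t ≠ tB} ≃ {s : T'.ι // s ≠ tP ∧ s ≠ tQ ∧ s ≠ tR}
  μ : T.ι → Perm (Fin 4)
  hμ : ∀ t, Perm.sign (μ t) = 1
  Φ : T.ι × Fin 4 → T'.ι × Fin 4
  τ : T.ι × Fin 4 → Perm (Fin 4)
  hΦout : ∀ (t : T.ι) (h : t ≠ tA ∧ t ≠ tB) (j : Fin 4),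
    Φ (t, j) = ((ρ ⟨t, h⟩).val, μ t j) ∧ τ (t, j) = μ t
  hΦA : ∀ k : Fin 4, k ≠ 0 →
    Φ (tA, πA k) = ![(tP, πP 1), (tQ, πQ 1), (tR, πR 1), (tP, πP 1)] k ∧
    τ (tA, πA k) = ![1, πQ * πA⁻¹, πR * c132 * πA⁻¹, πP * c123 * πA⁻¹] k
  hΦB : ∀ k : Fin 4, k ≠ 0 →
    Φ (tB, πB k) = ![(tQ, πQ 0), (tQ, πQ 0), (tP, πP 0), (tR, πR 0)] k ∧
    τ (tB, πB k) = ![1, πQ * c01x23 * πB⁻¹, πP * c012 * πB⁻¹, πR * c013 * πB⁻¹] k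
  hcompat : ∀ F G σ, F ≠ (tA, πA 0) → F ≠ (tB, πB 0) →
      T.glue F = some (G, σ) → T'.glue (Φ F) = some (Φ G, τ G * σ * (τ F)⁻¹)
  hcompat_none : ∀ F, F ≠ (tA, πA 0) → F ≠ (tB, πB 0) →
      T.glue F = none → T'.glue (Φ F) = none

/-- The new central (degree three) edge of a 2-3 move, as a model edge of `T'`. -/
def Move23.centralEdge {T T' : Tri} (m : Move23 T T') : T'.ModelEdge :=
  (m.tP, epair (m.πP 0) (m.πP 1) (m.πP.injective.ne (by decide)))

/-- Correspondence between (model) edges of `T` and of `T'` under a 2-3 move: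
every model edge not on the central edge survives, carried by the face
correspondence `Φ, τ` through any face containing it that is not the disappearing
shared face. -/
def Move23.edgeCorr {T T' : Tri} (m : Move23 T T') :
    T.ModelEdge → T'.ModelEdge → Prop := fun e f =>
  ∃ i : Fin 4, i ∉ e.2.1 ∧ (e.1, i) ≠ (m.tA, m.πA 0) ∧ (e.1, i) ≠ (m.tB, m.πB 0) ∧
    f.1 = (m.Φ (e.1, i)).1 ∧ f.2 = e.2.map (m.τ (e.1, i))

/-- `T` and `T'` are related by a 2-3 move. -/
def Pachner23 (T T' : Tri) : Prop := Nonempty (Move23 T T')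

/-- `T` and `T'` are related by a 2-3 move or by a 3-2 move. -/
def PachnerStep (T T' : Tri) : Prop := Pachner23 T T' ∨ Pachner23 T' T

/-- connectivity by a sequence of 2-3 and 3-2 moves -/
def MovePath (T T' : Tri) : Prop :=
  ∃ (N : ℕ) (seq : Fin (N + 1) → Tri), seq 0 = T ∧ seq (Fin.last N) = T' ∧
    ∀ k : Fin N, PachnerStep (seq k.castSucc) (seq k.succ)

/-- connectivity by a sequence of 2-3 and 3-2 moves in which no triangulation,
including the two endpoints, has a degree one edge -/
def NoDegOnePath (T T' : Tri) : Prop :=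
  ∃ (N : ℕ) (seq : Fin (N + 1) → Tri), seq 0 = T ∧ seq (Fin.last N) = T' ∧
    (∀ k, ¬ (seq k).HasDegOneEdge) ∧
    ∀ k : Fin N, PachnerStep (seq k.castSucc) (seq k.succ)

/-- The opposite edge: the complementary pair of vertices. -/
def EdgePair.compl (s : EdgePair) : EdgePair :=
  ⟨s.1ᶜ, by simp [Finset.card_compl, s.2]⟩

end Paper

open Paper


namespace Paper

open Equiv

lemma fin4_cases : ∀ y : Fin 4, y = 0 ∨ y = 1 ∨ y = 2 ∨ y = 3 := by decide

lemma perm4_cases (σ : Perm (Fin 4)) (x : Fin 4) :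
    x = σ 0 ∨ x = σ 1 ∨ x = σ 2 ∨ x = σ 3 := by
  have h := σ.apply_symm_apply x
  rcases fin4_cases (σ.symm x) with hy | hy | hy | hy <;> rw [hy] at h <;> tauto

lemma p23_0 : p23 0 = 0 := by decide
lemma p23_1 : p23 1 = 1 := by decide
lemma p23_inv_0 : p23⁻¹ 0 = 0 := by decide
lemma p23_inv_1 : p23⁻¹ 1 = 1 := by decide

lemma sigma_image (πA πB : Perm (Fin 4)) :
    ({πA 0, πA 1} : Finset (Fin 4)).image (πB * p23 * πA⁻¹) = {πB 0, πB 1} := by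
  simp [Finset.image_insert, Perm.mul_apply, p23_0, p23_1]

lemma sigma_inv_image (πA πB : Perm (Fin 4)) :
    ({πB 0, πB 1} : Finset (Fin 4)).image (⇑(πB * p23 * πA⁻¹)⁻¹) = {πA 0, πA 1} := by
  simp [Finset.image_insert, Perm.mul_apply, mul_inv_rev, p23_inv_0, p23_inv_1,
    (by decide : p23.symm 0 = 0), (by decide : p23.symm 1 = 1)]

lemma compl_pair (σ : Perm (Fin 4)) :
    ({σ 2, σ 3} : Finset (Fin 4))ᶜ = {σ 0, σ 1} := by
  ext x
  rcases perm4_cases σ x with h | h | h | h <;> subst h <;>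
    simp [σ.injective.eq_iff]

lemma notin_pair (σ : Perm (Fin 4)) {i : Fin 4} (h : i ∉ ({σ 0, σ 1} : Finset (Fin 4))) :
    i = σ 2 ∨ i = σ 3 := by
  simp only [Finset.mem_insert, Finset.mem_singleton, not_or] at h
  rcases perm4_cases σ i with hh | hh | hh | hh <;> tauto

lemma Tri.edgeAdj_symm (T : Tri) {e f : T.ModelEdge} (h : T.edgeAdj e f) : T.edgeAdj f e := by
  obtain ⟨i, G, σ, hi, hg, hf1, hf2⟩ := h
  have hsym := T.glue_symm _ _ _ hg
  have hv := T.glue_vertex _ _ _ hg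
  refine ⟨G.2, (e.1, i), σ⁻¹, ?_, ?_, rfl, ?_⟩
  · rw [hf2, ← hv]
    intro hmem
    obtain ⟨x, hx, hxe⟩ := Finset.mem_image.mp hmem
    exact hi (by rwa [σ.injective hxe] at hx)
  · rw [hf1]
    exact hsym
  · have hid : ⇑σ⁻¹ ∘ ⇑σ = id := by ext x; simp
    rw [hf2, Finset.image_image, hid, Finset.image_id]

lemma degree_one_unique (T : Tri) (e : T.ModelEdge) (hdeg : T.degree (T.edgeOf e) = 1)
    (f : T.ModelEdge) (hf : T.edgeOf f = T.edgeOf e) : f = e := by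
  have hs := (Nat.card_eq_one_iff_unique.mp hdeg).1
  exact congrArg Subtype.val (@Subsingleton.elim _ hs ⟨f, hf⟩ ⟨e, rfl⟩)

lemma adj_of_cycle_glue (T : Tri) (tA tB : T.ι) (πA πB : Perm (Fin 4))
    (h : T.glue (tA, πA 2) = some ((tB, πB 3), πB * p23 * πA⁻¹)) :
    T.edgeAdj (tA, epair (πA 0) (πA 1) (πA.injective.ne (by decide)))
      (tB, epair (πB 0) (πB 1) (πB.injective.ne (by decide))) := by
  refine ⟨πA 2, (tB, πB 3), πB * p23 * πA⁻¹, ?_, h, rfl, (sigma_image πA πB).symm⟩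
  simp [epair, πA.injective.eq_iff]

lemma step_case (T : Tri) (tA tB : T.ι) (πA πB : Perm (Fin 4))
    (h : T.glue (tA, πA 2) = some ((tB, πB 3), πB * p23 * πA⁻¹))
    (b : T.ModelEdge) (G : T.ι × Fin 4) (σ : Perm (Fin 4))
    (hg : T.glue (tA, πA 2) = some (G, σ)) (hb1 : b.1 = G.1)
    (hb2 : b.2.1 = ({πA 0, πA 1} : Finset (Fin 4)).image σ) :
    b = (tB, epair (πB 0) (πB 1) (πB.injective.ne (by decide))) := by
  rw [h] at hg
  have hp := Option.some.inj hg
  have hG : G = (tB, πB 3) := (congrArg Prod.fst hp).symm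
  have hσ : σ = πB * p23 * πA⁻¹ := (congrArg Prod.snd hp).symm
  subst hG hσ
  exact Prod.ext hb1 (Subtype.ext (hb2.trans (sigma_image πA πB)))

lemma step_case' (T : Tri) (tA tB : T.ι) (πA πB : Perm (Fin 4))
    (h : T.glue (tA, πA 2) = some ((tB, πB 3), πB * p23 * πA⁻¹))
    (b : T.ModelEdge) (G : T.ι × Fin 4) (σ : Perm (Fin 4))
    (hg : T.glue (tB, πB 3) = some (G, σ)) (hb1 : b.1 = G.1)
    (hb2 : b.2.1 = ({πB 0, πB 1} : Finset (Fin 4)).image σ) :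
    b = (tA, epair (πA 0) (πA 1) (πA.injective.ne (by decide))) := by
  have h' := T.glue_symm _ _ _ h
  rw [h'] at hg
  have hp := Option.some.inj hg
  have hG : G = (tA, πA 2) := (congrArg Prod.fst hp).symm
  have hσ : σ = (πB * p23 * πA⁻¹)⁻¹ := (congrArg Prod.snd hp).symm
  subst hG hσ
  exact Prod.ext hb1 (Subtype.ext (hb2.trans (sigma_inv_image πA πB)))

lemma tri_helper (T : Tri) (tP tQ tR : T.ι)
    (hPQ : tP ≠ tQ) (hPR : tP ≠ tR) (hQR : tQ ≠ tR)
    (πP πQ πR : Perm (Fin 4))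
    (h1 : T.glue (tP, πP 2) = some ((tQ, πQ 3), πQ * p23 * πP⁻¹))
    (h2 : T.glue (tQ, πQ 2) = some ((tR, πR 3), πR * p23 * πQ⁻¹))
    (h3 : T.glue (tR, πR 2) = some ((tP, πP 3), πP * p23 * πR⁻¹))
    (s₀ : EdgePair) (hdeg : T.degree (T.edgeOf (tP, s₀)) = 1) :
    s₀.compl = epair (πP 0) (πP 1) (πP.injective.ne (by decide)) ∧
    T.degree (T.edgeOf ((tP, s₀.compl) : T.ModelEdge)) = 3 := by
  have h3' := T.glue_symm _ _ _ h3
  have hm2 : πP 2 ∈ s₀.1 := by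
    by_contra hc
    have adj : T.edgeAdj (tP, s₀) (tQ, s₀.map (πQ * p23 * πP⁻¹)) :=
      ⟨πP 2, (tQ, πQ 3), πQ * p23 * πP⁻¹, hc, h1, rfl, rfl⟩
    have heq := degree_one_unique T _ hdeg _ (Quot.sound adj).symm
    exact hPQ (congrArg Prod.fst heq).symm
  have hm3 : πP 3 ∈ s₀.1 := by
    by_contra hc
    have adj : T.edgeAdj (tP, s₀) (tR, s₀.map (πP * p23 * πR⁻¹)⁻¹) :=
      ⟨πP 3, (tR, πR 2), (πP * p23 * πR⁻¹)⁻¹, hc, h3', rfl, rfl⟩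
    have heq := degree_one_unique T _ hdeg _ (Quot.sound adj).symm
    exact hPR (congrArg Prod.fst heq).symm
  have hs : s₀.1 = {πP 2, πP 3} := by
    have hsub : ({πP 2, πP 3} : Finset (Fin 4)) ⊆ s₀.1 := by
      intro x hx
      rcases Finset.mem_insert.mp hx with h | h
      · exact h ▸ hm2
      · exact (Finset.mem_singleton.mp h) ▸ hm3
    exact (Finset.eq_of_subset_of_card_le hsub
      (by simp [s₀.2, Finset.card_pair (πP.injective.ne (by decide : (2:Fin 4) ≠ 3))])).symm
  have hcompl : s₀.compl = epair (πP 0) (πP 1) (πP.injective.ne (by decide)) := by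
    apply Subtype.ext
    show s₀.1ᶜ = {πP 0, πP 1}
    rw [hs, compl_pair]
  refine ⟨hcompl, ?_⟩
  have hmodel : ((tP, s₀.compl) : T.ModelEdge)
      = (tP, epair (πP 0) (πP 1) (πP.injective.ne (by decide))) := by rw [hcompl]
  rw [hmodel]
  set cP : EdgePair := epair (πP 0) (πP 1) (πP.injective.ne (by decide)) with hcP
  set cQ : EdgePair := epair (πQ 0) (πQ 1) (πQ.injective.ne (by decide)) with hcQ
  set cR : EdgePair := epair (πR 0) (πR 1) (πR.injective.ne (by decide)) with hcR
  have hmem : ∀ a b : T.ModelEdge, T.edgeAdj a b →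
      (a = (tP, cP) ∨ a = (tQ, cQ) ∨ a = (tR, cR)) →
      (b = (tP, cP) ∨ b = (tQ, cQ) ∨ b = (tR, cR)) := by
    rintro a b ⟨i, G, σ, hi, hg, hb1, hb2⟩ (rfl | rfl | rfl)
    · rcases notin_pair πP hi with rfl | rfl
      · exact Or.inr (Or.inl (step_case T tP tQ πP πQ h1 b G σ hg hb1 hb2))
      · exact Or.inr (Or.inr (step_case' T tR tP πR πP h3 b G σ hg hb1 hb2))
    · rcases notin_pair πQ hi with rfl | rfl
      · exact Or.inr (Or.inr (step_case T tQ tR πQ πR h2 b G σ hg hb1 hb2))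
      · exact Or.inl (step_case' T tP tQ πP πQ h1 b G σ hg hb1 hb2)
    · rcases notin_pair πR hi with rfl | rfl
      · exact Or.inl (step_case T tR tP πR πP h3 b G σ hg hb1 hb2)
      · exact Or.inr (Or.inl (step_case' T tQ tR πQ πR h2 b G σ hg hb1 hb2))
  have hchar : ∀ f : T.ModelEdge, T.edgeOf f = T.edgeOf ((tP, cP) : T.ModelEdge) ↔
      (f = (tP, cP) ∨ f = (tQ, cQ) ∨ f = (tR, cR)) := by
    intro f
    constructor
    · intro hf
      have hgen : Relation.EqvGen T.edgeAdj f (tP, cP) := Quot.eqvGen_exact hf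
      have inv : ∀ a b : T.ModelEdge, Relation.EqvGen T.edgeAdj a b →
          ((a = (tP, cP) ∨ a = (tQ, cQ) ∨ a = (tR, cR)) ↔
           (b = (tP, cP) ∨ b = (tQ, cQ) ∨ b = (tR, cR))) := by
        intro a b hab
        induction hab with
        | rel a b hr => exact ⟨fun h => hmem a b hr h, fun h => hmem b a (T.edgeAdj_symm hr) h⟩
        | refl a => exact Iff.rfl
        | symm a b _ ih => exact ih.symm
        | trans a b c _ _ ih1 ih2 => exact ih1.trans ih2
      exact (inv f _ hgen).mpr (Or.inl rfl)
    · rintro (rfl | rfl | rfl)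
      · rfl
      · exact (Quot.sound (adj_of_cycle_glue T tP tQ πP πQ h1)).symm
      · exact Quot.sound (adj_of_cycle_glue T tR tP πR πP h3)
  have e1 : {f : T.ModelEdge // T.edgeOf f = T.edgeOf ((tP, cP) : T.ModelEdge)} ≃
      {f : T.ModelEdge //
        f ∈ ({(tP, cP), (tQ, cQ), (tR, cR)} : Set T.ModelEdge)} :=
    Equiv.subtypeEquivRight (fun f => (hchar f).trans Iff.rfl)
  have hne1 : ((tP, cP) : T.ModelEdge) ∉ ({(tQ, cQ), (tR, cR)} : Set T.ModelEdge) := by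
    intro h
    rcases Set.mem_insert_iff.mp h with h | h
    · exact hPQ (congrArg Prod.fst h)
    · exact hPR (congrArg Prod.fst (Set.mem_singleton_iff.mp h))
  have hne2 : ((tQ, cQ) : T.ModelEdge) ≠ (tR, cR) := fun h => hQR (congrArg Prod.fst h)
  show Nat.card _ = 3
  rw [Nat.card_congr e1, Nat.card_coe_set_eq]
  exact (Set.ncard_insert_of_notMem hne1 ((Set.finite_singleton _).insert _)).trans
    (congrArg (· + 1) (Set.ncard_pair hne2))

end Paper

/-- **Anatomy of a degree one edge.**  Let `e = (t₀, s₀)` be a degree one edge of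
`T`, so that `t₀` is the unique model tetrahedron incident to `e`, and let
`e' = (t₀, s₀ᶜ)` be the edge of `t₀` opposite `e`.  Then:
(i) the only 3-2 move on `T` whose three tetrahedra include `t₀` is the 3-2 move
performed along `e'`, which is then a degree three edge (whose three incident
tetrahedra are distinct, as required by the move); and
(ii) the only 2-3 moves on `T` involving `t₀` are those performed on one of the
two faces of `t₀` not incident to `e` (the faces `(t₀, i)` with `i ∈ s₀`).
Reversing (i) gives the unique way a degree one edge arises from a 2-3 move
(applied to two distinct tetrahedra), and reversing (ii) gives the unique way a
degree one edge arises from a 3-2 move (applied to three distinct tetrahedra);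
the distinctness of the tetrahedra involved is part of the data of a move. -/
theorem anatomy_of_degree_one_edge
    (T : Tri) (t₀ : T.ι) (s₀ : EdgePair)
    (hdeg : T.degree (T.edgeOf (t₀, s₀)) = 1) :
    (∀ (T'' : Tri) (m : Move23 T'' T),
        (m.tP = t₀ ∨ m.tQ = t₀ ∨ m.tR = t₀) →
        T.edgeOf m.centralEdge = T.edgeOf (t₀, s₀.compl) ∧
        T.degree (T.edgeOf (t₀, s₀.compl)) = 3) ∧
    (∀ (T'' : Tri) (m : Move23 T T''),
        (m.tA = t₀ → m.πA 0 ∈ s₀.1) ∧ (m.tB = t₀ → m.πB 0 ∈ s₀.1)) := by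
  constructor
  · intro T'' m h
    rcases h with h | h | h
    · subst h
      obtain ⟨hc, hd⟩ := tri_helper T m.tP m.tQ m.tR m.hPQ m.hPR m.hQR m.πP m.πQ m.πR
        m.hPQglue m.hQRglue m.hRPglue s₀ hdeg
      refine ⟨?_, hd⟩
      rw [hc]
      rfl
    · subst h
      obtain ⟨hc, hd⟩ := tri_helper T m.tQ m.tR m.tP m.hQR (Ne.symm m.hPQ) (Ne.symm m.hPR)
        m.πQ m.πR m.πP m.hQRglue m.hRPglue m.hPQglue s₀ hdeg
      refine ⟨?_, hd⟩
      rw [hc]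
      exact Quot.sound (adj_of_cycle_glue T m.tP m.tQ m.πP m.πQ m.hPQglue)
    · subst h
      obtain ⟨hc, hd⟩ := tri_helper T m.tR m.tP m.tQ (Ne.symm m.hPR) (Ne.symm m.hQR) m.hPQ
        m.πR m.πP m.πQ m.hRPglue m.hPQglue m.hQRglue s₀ hdeg
      refine ⟨?_, hd⟩
      rw [hc]
      exact (Quot.sound (adj_of_cycle_glue T m.tR m.tP m.πR m.πP m.hRPglue)).symm
  · intro T'' m
    constructor
    · intro h
      subst h
      by_contra hc
      have adj : T.edgeAdj (m.tA, s₀) (m.tB, s₀.map (m.πB * p23 * m.πA⁻¹)) :=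
        ⟨m.πA 0, (m.tB, m.πB 0), m.πB * p23 * m.πA⁻¹, hc, m.hglue, rfl, rfl⟩
      have heq := degree_one_unique T _ hdeg _ (Quot.sound adj).symm
      exact m.hAB (congrArg Prod.fst heq).symm
    · intro h
      subst h
      by_contra hc
      have hsym := T.glue_symm _ _ _ m.hglue
      have adj : T.edgeAdj (m.tB, s₀) (m.tA, s₀.map (m.πB * p23 * m.πA⁻¹)⁻¹) :=
        ⟨m.πB 0, (m.tA, m.πA 0), (m.πB * p23 * m.πA⁻¹)⁻¹, hc, hsym, rfl, rfl⟩
      have heq := degree_one_unique T _ hdeg _ (Quot.sound adj).symm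
      exact m.hAB (congrArg Prod.fst heq)
end

section
/- If performing a single 2-3 move or a single 3-2 move on a triangulation produces a degree one edge, then that edge had degree two before the move; in particular, no single 2-3 or 3-2 move can convert an edge of degree greater than two into a degree one edge. -/
theorem Equiv.Perm.apply_inv_self {α : Type*} (f : Equiv.Perm α) (x : α) : f (f⁻¹ x) = x :=
  f.apply_symm_apply x

theorem Equiv.Perm.inv_apply_self {α : Type*} (f : Equiv.Perm α) (x : α) : f⁻¹ (f x) = x :=
  f.symm_apply_apply x

namespace Paper

open Equiv

/-! ### Auxiliary infrastructure -/

instance : DecidableEq EdgePair := by unfold EdgePair; infer_instance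
instance : Fintype EdgePair := by unfold EdgePair; infer_instance
instance (T : Tri) : Finite T.ModelEdge := by unfold Tri.ModelEdge; infer_instance

namespace EdgePair

theorem ext {s t : EdgePair} (h : s.1 = t.1) : s = t := Subtype.ext h

@[simp] theorem map_map (s : EdgePair) (π ρ : Perm (Fin 4)) :
    (s.map π).map ρ = s.map (ρ * π) := by
  apply ext
  simp [EdgePair.map, Finset.image_image, Function.comp_def]

@[simp] theorem map_one (s : EdgePair) : s.map 1 = s := by
  apply ext; simp [EdgePair.map]

theorem map_left_inj {s t : EdgePair} (π : Perm (Fin 4)) :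
    s.map π = t.map π ↔ s = t := by
  constructor
  · intro h
    apply ext
    have := congrArg Subtype.val h
    exact Finset.image_injective π.injective this
  · rintro rfl; rfl

theorem map_mem {s : EdgePair} {π : Perm (Fin 4)} {a : Fin 4} :
    π a ∈ (s.map π).1 ↔ a ∈ s.1 := by
  constructor
  · intro h
    obtain ⟨b, hb, hba⟩ := Finset.mem_image.1 h
    rwa [← π.injective hba]
  · intro h; exact Finset.mem_image_of_mem _ h

end EdgePair

namespace Tri

theorem edgeAdj_iff (T : Tri) (e f : T.ModelEdge) :
    T.edgeAdj e f ↔ ∃ i G σ, i ∉ e.2.1 ∧ T.glue (e.1, i) = some (G, σ) ∧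
      f = (G.1, e.2.map σ) := by
  constructor
  · rintro ⟨i, G, σ, h1, h2, h3, h4⟩
    exact ⟨i, G, σ, h1, h2, by
      refine Prod.ext h3 (EdgePair.ext ?_)
      exact h4⟩
  · rintro ⟨i, G, σ, h1, h2, rfl⟩
    exact ⟨i, G, σ, h1, h2, rfl, rfl⟩

theorem edgeAdj_symm_s3 (T : Tri) {e f : T.ModelEdge} (h : T.edgeAdj e f) :
    T.edgeAdj f e := by
  rw [edgeAdj_iff] at h ⊢
  obtain ⟨i, G, σ, h1, h2, rfl⟩ := h
  have hsym := T.glue_symm _ _ _ h2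
  have hv : σ i = G.2 := T.glue_vertex _ _ _ h2
  refine ⟨G.2, (e.1, i), σ⁻¹, ?_, ?_, ?_⟩
  · rw [← hv]
    simpa using (fun hmem => h1 (EdgePair.map_mem.1 hmem))
  · show T.glue (G.1, G.2) = _
    rw [Prod.mk.eta]; exact hsym
  · refine Prod.ext rfl ?_
    simp
theorem edgeOf_eq_of_adj (T : Tri) {e f : T.ModelEdge} (h : T.edgeAdj e f) :
    T.edgeOf e = T.edgeOf f := Quot.sound h

theorem class_closed (T : Tri) (S : Set T.ModelEdge)
    (h : ∀ a ∈ S, ∀ b, T.edgeAdj a b → b ∈ S) {e e' : T.ModelEdge}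
    (he : e ∈ S) (h' : T.edgeOf e' = T.edgeOf e) : e' ∈ S := by
  have hgen : Relation.EqvGen T.edgeAdj e' e := Quot.eq.1 h'
  have key : ∀ x y, Relation.EqvGen T.edgeAdj x y → (x ∈ S ↔ y ∈ S) := by
    intro x y hxy
    induction hxy with
    | rel a b hab => exact ⟨fun ha => h a ha b hab, fun hb => h b hb a (T.edgeAdj_symm_s3 hab)⟩
    | refl a => exact Iff.rfl
    | symm a b _ ih => exact ih.symm
    | trans a b c _ _ ih1 ih2 => exact ih1.trans ih2
  exact (key e' e hgen).2 he

theorem deg_one_unique (T : Tri) {e e' : T.ModelEdge}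
    (h1 : T.degree (T.edgeOf e) = 1) (h : T.edgeOf e' = T.edgeOf e) : e' = e := by
  rw [Tri.degree, Nat.card_eq_one_iff_unique] at h1
  have := h1.1
  exact congrArg Subtype.val (Subsingleton.elim (⟨e', h⟩ : {x : T.ModelEdge // T.edgeOf x = T.edgeOf e}) ⟨e, rfl⟩)

theorem deg_eq_one (T : Tri) {e : T.ModelEdge}
    (h : ∀ e', T.edgeOf e' = T.edgeOf e → e' = e) : T.degree (T.edgeOf e) = 1 := by
  rw [Tri.degree, Nat.card_eq_one_iff_unique]
  constructor
  · constructor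
    intro ⟨x, hx⟩ ⟨y, hy⟩
    simp only [Subtype.mk.injEq]
    rw [h x hx, h y hy]
  · exact ⟨⟨e, rfl⟩⟩

theorem deg_eq_two (T : Tri) {e₁ e₂ : T.ModelEdge} (hne : e₁ ≠ e₂)
    (h2 : T.edgeOf e₂ = T.edgeOf e₁)
    (h : ∀ e', T.edgeOf e' = T.edgeOf e₁ → e' = e₁ ∨ e' = e₂) :
    T.degree (T.edgeOf e₁) = 2 := by
  rw [Tri.degree, Nat.card_eq_two_iff]
  refine ⟨⟨e₁, rfl⟩, ⟨e₂, h2⟩, ?_, ?_⟩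
  · intro hcon
    exact hne (congrArg Subtype.val hcon)
  · apply Set.eq_univ_iff_forall.2
    rintro ⟨x, hx⟩
    rcases h x hx with rfl | rfl
    · exact Set.mem_insert _ _
    · exact Set.mem_insert_of_mem _ rfl

theorem deg_ne_one (T : Tri) {e₁ e₂ : T.ModelEdge} (hne : e₁ ≠ e₂)
    (h2 : T.edgeOf e₂ = T.edgeOf e₁) : T.degree (T.edgeOf e₁) ≠ 1 :=
  fun h => hne (T.deg_one_unique h h2).symm

end Tri

end Paper

namespace Paper

open Equiv

theorem kcases : ∀ k : Fin 4, k ≠ 0 → k = 1 ∨ k = 2 ∨ k = 3 := by decide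

namespace Move23

variable {T T' : Tri} (m : Move23 T T')

def faceA : T.ι × Fin 4 := (m.tA, m.πA 0)
def faceB : T.ι × Fin 4 := (m.tB, m.πB 0)
def σAB : Perm (Fin 4) := m.πB * p23 * m.πA⁻¹

/-- transport of an edge pair through a face -/
def tr (F : T.ι × Fin 4) (s : EdgePair) : T'.ModelEdge := ((m.Φ F).1, s.map (m.τ F))

theorem glue_faceA : T.glue m.faceA = some (m.faceB, m.σAB) := m.hglue

theorem glue_faceB : T.glue m.faceB = some (m.faceA, m.σAB⁻¹) :=
  T.glue_symm _ _ _ m.hglue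

theorem target_ok {F G : T.ι × Fin 4} {σ : Perm (Fin 4)} (hA : F ≠ m.faceA)
    (hB : F ≠ m.faceB) (h : T.glue F = some (G, σ)) : G ≠ m.faceA ∧ G ≠ m.faceB := by
  constructor <;> rintro rfl
  · have h2 := T.glue_symm _ _ _ h
    rw [m.glue_faceA] at h2
    obtain ⟨h3, -⟩ := Prod.mk.injEq .. ▸ (Option.some.injEq .. ▸ h2)
    exact hB h3.symm
  · have h2 := T.glue_symm _ _ _ h
    rw [m.glue_faceB] at h2
    obtain ⟨h3, -⟩ := Prod.mk.injEq .. ▸ (Option.some.injEq .. ▸ h2)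
    exact hA h3.symm

theorem ΦA1 : m.Φ (m.tA, m.πA 1) = (m.tQ, m.πQ 1) := by
  have := (m.hΦA 1 (by decide)).1; simpa using this
theorem ΦA2 : m.Φ (m.tA, m.πA 2) = (m.tR, m.πR 1) := by
  have := (m.hΦA 2 (by decide)).1; simpa using this
theorem ΦA3 : m.Φ (m.tA, m.πA 3) = (m.tP, m.πP 1) := by
  have := (m.hΦA 3 (by decide)).1; simpa using this
theorem τA1 : m.τ (m.tA, m.πA 1) = m.πQ * m.πA⁻¹ := by
  have := (m.hΦA 1 (by decide)).2; simpa using this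
theorem τA2 : m.τ (m.tA, m.πA 2) = m.πR * c132 * m.πA⁻¹ := by
  have := (m.hΦA 2 (by decide)).2; simpa using this
theorem τA3 : m.τ (m.tA, m.πA 3) = m.πP * c123 * m.πA⁻¹ := by
  have := (m.hΦA 3 (by decide)).2; simpa using this
theorem ΦB1 : m.Φ (m.tB, m.πB 1) = (m.tQ, m.πQ 0) := by
  have := (m.hΦB 1 (by decide)).1; simpa using this
theorem ΦB2 : m.Φ (m.tB, m.πB 2) = (m.tP, m.πP 0) := by
  have := (m.hΦB 2 (by decide)).1; simpa using this
theorem ΦB3 : m.Φ (m.tB, m.πB 3) = (m.tR, m.πR 0) := by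
  have := (m.hΦB 3 (by decide)).1; simpa using this
theorem τB1 : m.τ (m.tB, m.πB 1) = m.πQ * c01x23 * m.πB⁻¹ := by
  have := (m.hΦB 1 (by decide)).2; simpa using this
theorem τB2 : m.τ (m.tB, m.πB 2) = m.πP * c012 * m.πB⁻¹ := by
  have := (m.hΦB 2 (by decide)).2; simpa using this
theorem τB3 : m.τ (m.tB, m.πB 3) = m.πR * c013 * m.πB⁻¹ := by
  have := (m.hΦB 3 (by decide)).2; simpa using this

theorem phi_vert {t : T.ι} {i : Fin 4} (hA : (t, i) ≠ m.faceA) (hB : (t, i) ≠ m.faceB) :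
    (m.Φ (t, i)).2 = m.τ (t, i) i := by
  by_cases htA : t = m.tA
  · subst htA
    have hi : i = m.πA (m.πA⁻¹ i) := (m.πA.apply_inv_self i).symm
    have hk0 : m.πA⁻¹ i ≠ 0 := by
      intro h0; apply hA; rw [faceA, hi, h0]
    rcases kcases _ hk0 with hk | hk | hk <;> rw [hi, hk]
    · rw [m.ΦA1, m.τA1]; simp
    · rw [m.ΦA2, m.τA2]; simp [Perm.mul_apply]; rw [show c132 2 = 1 by decide]
    · rw [m.ΦA3, m.τA3]; simp [Perm.mul_apply]; rw [show c123 3 = 1 by decide]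
  by_cases htB : t = m.tB
  · subst htB
    have hi : i = m.πB (m.πB⁻¹ i) := (m.πB.apply_inv_self i).symm
    have hk0 : m.πB⁻¹ i ≠ 0 := by
      intro h0; apply hB; rw [faceB, hi, h0]
    rcases kcases _ hk0 with hk | hk | hk <;> rw [hi, hk]
    · rw [m.ΦB1, m.τB1]; simp [Perm.mul_apply]; rw [show c01x23 1 = 0 by decide]
    · rw [m.ΦB2, m.τB2]; simp [Perm.mul_apply]; rw [show c012 2 = 0 by decide]
    · rw [m.ΦB3, m.τB3]; simp [Perm.mul_apply]; rw [show c013 3 = 0 by decide]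
  · have := (m.hΦout t ⟨htA, htB⟩ i)
    rw [this.1, this.2]

theorem key {t : T.ι} {i : Fin 4} {s : EdgePair} {G : T.ι × Fin 4} {σ : Perm (Fin 4)}
    (hs : i ∉ s.1) (hA : (t, i) ≠ m.faceA) (hB : (t, i) ≠ m.faceB)
    (hg : T.glue (t, i) = some (G, σ)) :
    T'.edgeAdj (m.tr (t, i) s) (m.tr G (s.map σ)) := by
  erw [Tri.edgeAdj_iff]
  refine ⟨(m.Φ (t, i)).2, m.Φ G, m.τ G * σ * (m.τ (t, i))⁻¹, ?_, ?_, ?_⟩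
  · rw [m.phi_vert hA hB]
    exact fun h => hs (EdgePair.map_mem.1 h)
  · show T'.glue ((m.Φ (t, i)).1, (m.Φ (t, i)).2) = _
    rw [Prod.mk.eta]
    exact m.hcompat _ _ _ hA hB hg
  · refine Prod.ext rfl ?_
    show (s.map σ).map (m.τ G) = _
    simp [tr, EdgePair.map_map, mul_assoc]

theorem fiber_P {G : T.ι × Fin 4} (hA : G ≠ m.faceA) (hB : G ≠ m.faceB)
    (h : (m.Φ G).1 = m.tP) : G = (m.tA, m.πA 3) ∨ G = (m.tB, m.πB 2) := by
  obtain ⟨t, i⟩ := G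
  by_cases htA : t = m.tA
  · subst htA
    have hi : i = m.πA (m.πA⁻¹ i) := (m.πA.apply_inv_self i).symm
    have hk0 : m.πA⁻¹ i ≠ 0 := fun h0 => hA (by rw [faceA, hi, h0])
    rcases kcases _ hk0 with hk | hk | hk <;> rw [hi, hk] at h ⊢
    · rw [m.ΦA1] at h; exact absurd h.symm m.hPQ
    · rw [m.ΦA2] at h; exact absurd h.symm m.hPR
    · exact Or.inl rfl
  by_cases htB : t = m.tB
  · subst htB
    have hi : i = m.πB (m.πB⁻¹ i) := (m.πB.apply_inv_self i).symm
    have hk0 : m.πB⁻¹ i ≠ 0 := fun h0 => hB (by rw [faceB, hi, h0])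
    rcases kcases _ hk0 with hk | hk | hk <;> rw [hi, hk] at h ⊢
    · rw [m.ΦB1] at h; exact absurd h.symm m.hPQ
    · exact Or.inr rfl
    · rw [m.ΦB3] at h; exact absurd h.symm m.hPR
  · rw [(m.hΦout t ⟨htA, htB⟩ i).1] at h
    exact absurd h (m.ρ ⟨t, htA, htB⟩).2.1

theorem fiber_Q {G : T.ι × Fin 4} (hA : G ≠ m.faceA) (hB : G ≠ m.faceB)
    (h : (m.Φ G).1 = m.tQ) : G = (m.tA, m.πA 1) ∨ G = (m.tB, m.πB 1) := by
  obtain ⟨t, i⟩ := G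
  by_cases htA : t = m.tA
  · subst htA
    have hi : i = m.πA (m.πA⁻¹ i) := (m.πA.apply_inv_self i).symm
    have hk0 : m.πA⁻¹ i ≠ 0 := fun h0 => hA (by rw [faceA, hi, h0])
    rcases kcases _ hk0 with hk | hk | hk <;> rw [hi, hk] at h ⊢
    · exact Or.inl rfl
    · rw [m.ΦA2] at h; exact absurd h.symm m.hQR
    · rw [m.ΦA3] at h; exact absurd h m.hPQ
  by_cases htB : t = m.tB
  · subst htB
    have hi : i = m.πB (m.πB⁻¹ i) := (m.πB.apply_inv_self i).symm
    have hk0 : m.πB⁻¹ i ≠ 0 := fun h0 => hB (by rw [faceB, hi, h0])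
    rcases kcases _ hk0 with hk | hk | hk <;> rw [hi, hk] at h ⊢
    · exact Or.inr rfl
    · rw [m.ΦB2] at h; exact absurd h m.hPQ
    · rw [m.ΦB3] at h; exact absurd h.symm m.hQR
  · rw [(m.hΦout t ⟨htA, htB⟩ i).1] at h
    exact absurd h (m.ρ ⟨t, htA, htB⟩).2.2.1

theorem fiber_R {G : T.ι × Fin 4} (hA : G ≠ m.faceA) (hB : G ≠ m.faceB)
    (h : (m.Φ G).1 = m.tR) : G = (m.tA, m.πA 2) ∨ G = (m.tB, m.πB 3) := by
  obtain ⟨t, i⟩ := G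
  by_cases htA : t = m.tA
  · subst htA
    have hi : i = m.πA (m.πA⁻¹ i) := (m.πA.apply_inv_self i).symm
    have hk0 : m.πA⁻¹ i ≠ 0 := fun h0 => hA (by rw [faceA, hi, h0])
    rcases kcases _ hk0 with hk | hk | hk <;> rw [hi, hk] at h ⊢
    · rw [m.ΦA1] at h; exact absurd h m.hQR
    · exact Or.inl rfl
    · rw [m.ΦA3] at h; exact absurd h m.hPR
  by_cases htB : t = m.tB
  · subst htB
    have hi : i = m.πB (m.πB⁻¹ i) := (m.πB.apply_inv_self i).symm
    have hk0 : m.πB⁻¹ i ≠ 0 := fun h0 => hB (by rw [faceB, hi, h0])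
    rcases kcases _ hk0 with hk | hk | hk <;> rw [hi, hk] at h ⊢
    · rw [m.ΦB1] at h; exact absurd h m.hQR
    · rw [m.ΦB2] at h; exact absurd h m.hPR
    · exact Or.inr rfl
  · rw [(m.hΦout t ⟨htA, htB⟩ i).1] at h
    exact absurd h (m.ρ ⟨t, htA, htB⟩).2.2.2

theorem fiber_out {G : T.ι × Fin 4} (hA : G ≠ m.faceA) (hB : G ≠ m.faceB)
    (x : {t : T.ι // t ≠ m.tA ∧ t ≠ m.tB}) (h : (m.Φ G).1 = (m.ρ x).1) :
    G.1 = x.1 ∧ m.τ G = m.μ G.1 := by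
  obtain ⟨t, i⟩ := G
  by_cases htA : t = m.tA
  · subst htA
    have hi : i = m.πA (m.πA⁻¹ i) := (m.πA.apply_inv_self i).symm
    have hk0 : m.πA⁻¹ i ≠ 0 := fun h0 => hA (by rw [faceA, hi, h0])
    rcases kcases _ hk0 with hk | hk | hk <;> rw [hi, hk] at h ⊢
    · rw [m.ΦA1] at h; exact absurd h.symm (m.ρ x).2.2.1
    · rw [m.ΦA2] at h; exact absurd h.symm (m.ρ x).2.2.2
    · rw [m.ΦA3] at h; exact absurd h.symm (m.ρ x).2.1
  by_cases htB : t = m.tB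
  · subst htB
    have hi : i = m.πB (m.πB⁻¹ i) := (m.πB.apply_inv_self i).symm
    have hk0 : m.πB⁻¹ i ≠ 0 := fun h0 => hB (by rw [faceB, hi, h0])
    rcases kcases _ hk0 with hk | hk | hk <;> rw [hi, hk] at h ⊢
    · rw [m.ΦB1] at h; exact absurd h.symm (m.ρ x).2.2.1
    · rw [m.ΦB2] at h; exact absurd h.symm (m.ρ x).2.1
    · rw [m.ΦB3] at h; exact absurd h.symm (m.ρ x).2.2.2
  · have ho := m.hΦout t ⟨htA, htB⟩ i
    rw [ho.1] at h
    have hx : (⟨t, htA, htB⟩ : {t : T.ι // t ≠ m.tA ∧ t ≠ m.tB}) = x :=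
      m.ρ.injective (Subtype.ext h)
    exact ⟨congrArg Subtype.val hx, ho.2⟩

theorem prodeq {α β : Type*} {a c : α} {b d : β} (h : (a, b) = (c, d)) : a = c ∧ b = d :=
  ⟨congrArg Prod.fst h, congrArg Prod.snd h⟩

theorem central_deg_ne_one : T'.degree (T'.edgeOf m.centralEdge) ≠ 1 := by
  have hQ : T'.edgeAdj m.centralEdge
      (m.tQ, epair (m.πQ 0) (m.πQ 1) (m.πQ.injective.ne (by decide))) := by
    erw [Tri.edgeAdj_iff]
    refine ⟨m.πP 2, (m.tQ, m.πQ 3), m.πQ * p23 * m.πP⁻¹, ?_, m.hPQglue, ?_⟩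
    · show m.πP 2 ∉ ({m.πP 0, m.πP 1} : Finset (Fin 4))
      simp [m.πP.injective.eq_iff]
    · refine Prod.ext rfl (EdgePair.ext ?_)
      show ({m.πQ 0, m.πQ 1} : Finset (Fin 4)) = ({m.πP 0, m.πP 1} : Finset (Fin 4)).image _
      rw [Finset.image_insert, Finset.image_singleton]
      simp only [Perm.mul_apply, Perm.inv_apply_self]
      rw [show p23 0 = 0 by decide, show p23 1 = 1 by decide]
  refine T'.deg_ne_one ?_ (T'.edgeOf_eq_of_adj hQ).symm
  intro hcon
  exact m.hPQ (congrArg Prod.fst hcon)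

theorem main_out {t : T.ι} (ht : t ≠ m.tA ∧ t ≠ m.tB) (s : EdgePair) :
    (T'.degree (T'.edgeOf ((m.ρ ⟨t, ht⟩).1, s.map (m.μ t))) = 1 →
      T.degree (T.edgeOf (t, s)) = 1) ∧
    (T.degree (T.edgeOf (t, s)) = 1 →
      T'.degree (T'.edgeOf ((m.ρ ⟨t, ht⟩).1, s.map (m.μ t))) = 1) := by
  set f : T'.ModelEdge := ((m.ρ ⟨t, ht⟩).1, s.map (m.μ t)) with hf
  constructor
  · intro h1
    apply T.deg_eq_one
    intro e' he'
    refine T.class_closed {x | x = (t, s)} ?_ rfl he'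
    rintro a rfl b hadj
    erw [Tri.edgeAdj_iff] at hadj
    obtain ⟨j, G, σ, hj, hg, rfl⟩ := hadj
    have hjA : ((t, s).1, j) ≠ m.faceA := fun hEq => ht.1 (congrArg Prod.fst hEq)
    have hjB : ((t, s).1, j) ≠ m.faceB := fun hEq => ht.2 (congrArg Prod.fst hEq)
    have hadj' := m.key hj hjA hjB hg
    have htr : m.tr ((t, s).1, j) (t, s).2 = f := by
      show ((m.Φ (t, j)).1, s.map (m.τ (t, j))) = f
      rw [(m.hΦout t ht j).1, (m.hΦout t ht j).2]
    rw [htr] at hadj'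
    have heq : m.tr G ((t, s).2.map σ) = f :=
      T'.deg_one_unique h1 (T'.edgeOf_eq_of_adj hadj').symm
    obtain ⟨hGA, hGB⟩ := m.target_ok hjA hjB hg
    obtain ⟨h2, h3⟩ := prodeq heq
    obtain ⟨hG1, hτG⟩ := m.fiber_out hGA hGB ⟨t, ht⟩ h2
    rw [hτG, hG1] at h3
    rw [EdgePair.map_map] at h3
    have hss : s.map σ = s := by
      rw [← EdgePair.map_left_inj (m.μ t), EdgePair.map_map]
      exact h3
    exact Prod.ext hG1 hss
  · intro h1
    apply T'.deg_eq_one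
    intro f' hf'
    refine T'.class_closed {x | x = f} ?_ rfl hf'
    rintro a rfl b hadj
    erw [Tri.edgeAdj_iff] at hadj
    obtain ⟨j', G', σ', hj', hg', rfl⟩ := hadj
    set k : Fin 4 := (m.μ t)⁻¹ j' with hkdef
    have hμk : m.μ t k = j' := (m.μ t).apply_inv_self j'
    have hface : m.Φ (t, k) = (f.1, j') := by
      rw [(m.hΦout t ht k).1, hμk]
    have hk : k ∉ s.1 := by
      intro hmem
      exact hj' (hμk ▸ EdgePair.map_mem.2 hmem)
    have hkA : (t, k) ≠ m.faceA := fun hEq => ht.1 (congrArg Prod.fst hEq)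
    have hkB : (t, k) ≠ m.faceB := fun hEq => ht.2 (congrArg Prod.fst hEq)
    rcases hTg : T.glue (t, k) with _ | ⟨G, σ⟩
    · have := m.hcompat_none (t, k) hkA hkB hTg
      rw [hface] at this
      rw [this] at hg'
      exact absurd hg' (by simp)
    · have hcmp := m.hcompat (t, k) G σ hkA hkB hTg
      rw [hface] at hcmp
      rw [hcmp] at hg'
      obtain ⟨hG', hσ'⟩ := prodeq (Option.some.inj hg')
      have hTadj : T.edgeAdj (t, s) (G.1, s.map σ) :=
        (T.edgeAdj_iff _ _).2 ⟨k, G, σ, hk, hTg, rfl⟩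
      have heq : (G.1, s.map σ) = (t, s) :=
        T.deg_one_unique h1 (T.edgeOf_eq_of_adj hTadj).symm
      obtain ⟨hG1, hss⟩ := prodeq heq
      have hτG : m.τ G = m.μ t := by
        have := (m.hΦout G.1 (hG1 ▸ ht) G.2).2
        rw [Prod.mk.eta] at this
        rw [this, hG1]
      have hΦG : (m.Φ G).1 = f.1 := by
        have := (m.hΦout G.1 (hG1 ▸ ht) G.2).1
        rw [Prod.mk.eta] at this
        rw [this]
        exact congrArg (fun x : {u : T.ι // u ≠ m.tA ∧ u ≠ m.tB} => (m.ρ x).1)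
          (Subtype.ext hG1)
      show (G'.1, f.2.map σ') = f
      refine Prod.ext ?_ ?_
      · show G'.1 = f.1
        rw [← hG']; exact hΦG
      · show f.2.map σ' = f.2
        rw [← hσ', (m.hΦout t ht k).2, hτG]
        show (s.map (m.μ t)).map _ = s.map (m.μ t)
        rw [EdgePair.map_map]
        have hgrp : m.μ t * σ * (m.μ t)⁻¹ * m.μ t = m.μ t * σ := by group
        rw [hgrp, ← EdgePair.map_map, hss]

theorem strip_pair {s : EdgePair} {π : Perm (Fin 4)} {u : Finset (Fin 4)}
    (hs : s.1 = u.image π) {a b : Fin 4}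
    (h : ∀ y : Fin 4, y ∉ u → y = a ∨ y = b) :
    ∀ x, x ∉ s.1 → x = π a ∨ x = π b := by
  intro x hx
  have hnm : π⁻¹ x ∉ u := by
    intro hm
    apply hx
    rw [hs]
    have h2 : π (π⁻¹ x) ∈ u.image π := Finset.mem_image_of_mem π hm
    rwa [π.apply_inv_self] at h2
  rcases h _ hnm with h' | h'
  · left; rw [← π.apply_inv_self x, h']
  · right; rw [← π.apply_inv_self x, h']

theorem strip_not_mem {s : EdgePair} {π : Perm (Fin 4)} {u : Finset (Fin 4)}
    (hs : s.1 = u.image π) {y : Fin 4} (h : y ∉ u) : π y ∉ s.1 := by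
  rw [hs]
  intro hm
  obtain ⟨z, hz, hzy⟩ := Finset.mem_image.1 hm
  exact h (by rwa [← π.injective hzy])

theorem strip_mem {s : EdgePair} {π : Perm (Fin 4)} {u : Finset (Fin 4)}
    (hs : s.1 = u.image π) {y : Fin 4} (h : y ∈ u) : π y ∈ s.1 := by
  rw [hs]; exact Finset.mem_image_of_mem π h

/-- Step lemma for a side edge: if the original edge `(t0, s)` has degree one,
then every `T'`-neighbour of the transported edge through face `i1` is the
transported edge through face `i2`. -/
theorem side_step {t0 : T.ι} {s : EdgePair} {i1 i2 : Fin 4}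
    (hF1A : (t0, i1) ≠ m.faceA) (hF1B : (t0, i1) ≠ m.faceB)
    (hi1 : i1 ∉ s.1)
    (huniq : ∀ x, x ∉ s.1 → x = i1 ∨ x = i2)
    {v1 : Fin 4} {W1 : T'.ι × Fin 4} {ξ1 : Perm (Fin 4)}
    (hg1 : T'.glue ((m.Φ (t0, i1)).1, v1) = some (W1, ξ1))
    (hW1 : W1.1 = (m.Φ (t0, i2)).1)
    (hξ1 : (m.tr (t0, i1) s).2.map ξ1 = (m.tr (t0, i2) s).2)
    (huniqF1 : ∀ x, x ∉ (m.tr (t0, i1) s).2.1 → x = v1 ∨ x = m.τ (t0, i1) i1)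
    (h1 : T.degree (T.edgeOf (t0, s)) = 1) :
    ∀ b, T'.edgeAdj (m.tr (t0, i1) s) b → b = m.tr (t0, i2) s := by
  intro b hadj
  erw [Tri.edgeAdj_iff] at hadj
  obtain ⟨x, G', σ', hx, hg', rfl⟩ := hadj
  rcases huniqF1 x hx with hxv | hxv <;> rw [hxv] at hg'
  · rw [show ((m.tr (t0, i1) s).1, v1) = ((m.Φ (t0, i1)).1, v1) from rfl, hg1] at hg'
    obtain ⟨h2, h3⟩ := prodeq (Option.some.inj hg')
    refine Prod.ext ?_ ?_
    · show G'.1 = (m.Φ (t0, i2)).1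
      rw [← h2, hW1]
    · show (m.tr (t0, i1) s).2.map σ' = (m.tr (t0, i2) s).2
      rw [← h3, hξ1]
  · have hface : ((m.tr (t0, i1) s).1, m.τ (t0, i1) i1) = m.Φ (t0, i1) :=
      Prod.ext rfl (m.phi_vert hF1A hF1B).symm
    rw [hface] at hg'
    rcases hTg : T.glue (t0, i1) with _ | ⟨G, σ⟩
    · rw [m.hcompat_none _ hF1A hF1B hTg] at hg'
      exact absurd hg' (by simp)
    · rw [m.hcompat _ _ _ hF1A hF1B hTg] at hg'
      obtain ⟨hG', hσ'⟩ := prodeq (Option.some.inj hg')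
      have hTadj : T.edgeAdj (t0, s) (G.1, s.map σ) :=
        (T.edgeAdj_iff _ _).2 ⟨i1, G, σ, hi1, hTg, rfl⟩
      obtain ⟨hG1, hss⟩ := prodeq (T.deg_one_unique h1 (T.edgeOf_eq_of_adj hTadj).symm)
      have hG2mem : G.2 ∉ s.1 := by
        have hv := T.glue_vertex _ _ _ hTg
        intro hmm
        rw [show (t0, i1).2 = i1 from rfl] at hv
        rw [← hv, ← hss] at hmm
        exact hi1 (EdgePair.map_mem.1 hmm)
      have hGeq : G = (t0, i2) := by
        rcases huniq _ hG2mem with h | h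
        · exact absurd (Prod.ext hG1 h) (T.glue_ne _ _ hTg)
        · exact Prod.ext hG1 h
      rw [hGeq] at hG' hσ'
      refine Prod.ext ?_ ?_
      · show G'.1 = (m.Φ (t0, i2)).1
        rw [← hG']
      · show (m.tr (t0, i1) s).2.map σ' = (m.tr (t0, i2) s).2
        rw [← hσ']
        show (s.map (m.τ (t0, i1))).map _ = s.map (m.τ (t0, i2))
        rw [EdgePair.map_map]
        have hgrp : m.τ (t0, i2) * σ * (m.τ (t0, i1))⁻¹ * m.τ (t0, i1)
            = m.τ (t0, i2) * σ := by group
        rw [hgrp, ← EdgePair.map_map, hss]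

theorem side_worker {t0 : T.ι} {s : EdgePair} {i1 i2 : Fin 4}
    (hF1A : (t0, i1) ≠ m.faceA) (hF1B : (t0, i1) ≠ m.faceB)
    (hF2A : (t0, i2) ≠ m.faceA) (hF2B : (t0, i2) ≠ m.faceB)
    (hi1 : i1 ∉ s.1) (hi2 : i2 ∉ s.1)
    (huniq : ∀ x, x ∉ s.1 → x = i1 ∨ x = i2)
    (hne : (m.Φ (t0, i1)).1 ≠ (m.Φ (t0, i2)).1)
    {v1 v2 : Fin 4} {W1 W2 : T'.ι × Fin 4} {ξ1 ξ2 : Perm (Fin 4)}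
    (hv1 : v1 ∉ (m.tr (t0, i1) s).2.1)
    (hg1 : T'.glue ((m.Φ (t0, i1)).1, v1) = some (W1, ξ1))
    (hW1 : W1.1 = (m.Φ (t0, i2)).1)
    (hξ1 : (m.tr (t0, i1) s).2.map ξ1 = (m.tr (t0, i2) s).2)
    (hg2 : T'.glue ((m.Φ (t0, i2)).1, v2) = some (W2, ξ2))
    (hW2 : W2.1 = (m.Φ (t0, i1)).1)
    (hξ2 : (m.tr (t0, i2) s).2.map ξ2 = (m.tr (t0, i1) s).2)
    (huniqF1 : ∀ x, x ∉ (m.tr (t0, i1) s).2.1 → x = v1 ∨ x = m.τ (t0, i1) i1)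
    (huniqF2 : ∀ x, x ∉ (m.tr (t0, i2) s).2.1 → x = v2 ∨ x = m.τ (t0, i2) i2) :
    T'.degree (T'.edgeOf (m.tr (t0, i1) s)) ≠ 1 ∧
    (T.degree (T.edgeOf (t0, s)) = 1 →
      T'.degree (T'.edgeOf (m.tr (t0, i1) s)) = 2) ∧
    T'.edgeOf (m.tr (t0, i2) s) = T'.edgeOf (m.tr (t0, i1) s) := by
  have hadj12 : T'.edgeAdj (m.tr (t0, i1) s) (m.tr (t0, i2) s) := by
    erw [Tri.edgeAdj_iff]
    exact ⟨v1, W1, ξ1, hv1, hg1, Prod.ext hW1.symm hξ1.symm⟩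
  have hne12 : m.tr (t0, i1) s ≠ m.tr (t0, i2) s :=
    fun h => hne (congrArg (fun z : T'.ModelEdge => z.1) h)
  refine ⟨?_, ?_, (T'.edgeOf_eq_of_adj hadj12).symm⟩
  · exact T'.deg_ne_one hne12 (T'.edgeOf_eq_of_adj hadj12).symm
  · intro h1
    refine T'.deg_eq_two hne12 (T'.edgeOf_eq_of_adj hadj12).symm ?_
    intro f' hf'
    have hclosed : ∀ a ∈ {x | x = m.tr (t0, i1) s ∨ x = m.tr (t0, i2) s},
        ∀ b, T'.edgeAdj a b →
          b ∈ {x | x = m.tr (t0, i1) s ∨ x = m.tr (t0, i2) s} := by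
      rintro a (rfl | rfl) b hadj
      · exact Or.inr (m.side_step hF1A hF1B hi1 huniq hg1 hW1 hξ1 huniqF1 h1 b hadj)
      · exact Or.inl (m.side_step hF2A hF2B hi2
          (fun x hx => (huniq x hx).symm) hg2 hW2 hξ2 huniqF2 h1 b hadj)
    exact T'.class_closed _ hclosed (Or.inl rfl) hf'

/-- Worker for an equatorial edge `(tA, s)`: if the transported edge has degree
one after the move, the original edge had degree two. -/
theorem eq_worker {s : EdgePair} {k kB : Fin 4}
    (hk0 : k ≠ 0) (hkB0 : kB ≠ 0)
    (hs0 : m.πA 0 ∉ s.1)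
    (huniq : ∀ x, x ∉ s.1 → x = m.πA 0 ∨ x = m.πA k)
    (huniqB : ∀ x, x ∉ ((s.map m.σAB) : EdgePair).1 → x = m.πB 0 ∨ x = m.πB kB)
    (hfib : ∀ G : T.ι × Fin 4, G ≠ m.faceA → G ≠ m.faceB →
      (m.Φ G).1 = (m.Φ (m.tA, m.πA k)).1 →
      G = (m.tA, m.πA k) ∨ G = (m.tB, m.πB kB))
    (hcoin : m.tr (m.tB, m.πB kB) (s.map m.σAB) = m.tr (m.tA, m.πA k) s)
    (h1 : T'.degree (T'.edgeOf (m.tr (m.tA, m.πA k) s)) = 1) :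
    T.degree (T.edgeOf (m.tA, s)) = 2 := by
  have hAkA : (m.tA, m.πA k) ≠ m.faceA :=
    fun h => hk0 (m.πA.injective (congrArg Prod.snd h))
  have hAkB : (m.tA, m.πA k) ≠ m.faceB := fun h => m.hAB (congrArg Prod.fst h)
  have hBkA : (m.tB, m.πB kB) ≠ m.faceA := fun h => m.hAB (congrArg Prod.fst h).symm
  have hBkB : (m.tB, m.πB kB) ≠ m.faceB :=
    fun h => hkB0 (m.πB.injective (congrArg Prod.snd h))
  have hadjAB : T.edgeAdj (m.tA, s) (m.tB, s.map m.σAB) := by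
    erw [Tri.edgeAdj_iff]
    exact ⟨m.πA 0, m.faceB, m.σAB, hs0, m.glue_faceA, rfl⟩
  have hneAB : (m.tA, s) ≠ (m.tB, s.map m.σAB) :=
    fun h => m.hAB (congrArg Prod.fst h)
  refine T.deg_eq_two hneAB (T.edgeOf_eq_of_adj hadjAB).symm ?_
  intro e' he'
  have hclosed : ∀ a ∈ {x | x = (m.tA, s) ∨ x = (m.tB, s.map m.σAB)},
      ∀ b, T.edgeAdj a b →
        b ∈ {x | x = (m.tA, s) ∨ x = (m.tB, s.map m.σAB)} := by
    rintro a (rfl | rfl) b hadj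
    · erw [Tri.edgeAdj_iff] at hadj
      obtain ⟨j, G, σ, hj, hg, rfl⟩ := hadj
      rcases huniq j hj with hjv | hjv <;> rw [hjv] at hg hj
      · rw [show ((m.tA, s).1, m.πA 0) = m.faceA from rfl, m.glue_faceA] at hg
        obtain ⟨h2, h3⟩ := prodeq (Option.some.inj hg)
        right
        show (G.1, (m.tA, s).2.map σ) = (m.tB, s.map m.σAB)
        rw [← h2, ← h3]
        exact rfl
      · have hadj' := m.key hj hAkA hAkB hg
        have heq : m.tr G (s.map σ) = m.tr (m.tA, m.πA k) s :=
          T'.deg_one_unique h1 (T'.edgeOf_eq_of_adj hadj').symm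
        obtain ⟨hGA, hGB⟩ := m.target_ok hAkA hAkB hg
        have hΦ1 : (m.Φ G).1 = (m.Φ (m.tA, m.πA k)).1 :=
          congrArg (fun z : T'.ModelEdge => z.1) heq
        rcases hfib G hGA hGB hΦ1 with hGeq | hGeq
        · exact absurd hGeq (T.glue_ne _ _ hg)
        · right
          have hc2 : ((s.map m.σAB).map (m.τ (m.tB, m.πB kB)) : EdgePair)
              = s.map (m.τ (m.tA, m.πA k)) :=
            congrArg (fun z : T'.ModelEdge => z.2) hcoin
          have he2 : (s.map σ).map (m.τ G) = s.map (m.τ (m.tA, m.πA k)) :=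
            congrArg (fun z : T'.ModelEdge => z.2) heq
          rw [hGeq] at he2
          have hssB : s.map σ = s.map m.σAB :=
            (EdgePair.map_left_inj _).1 (he2.trans hc2.symm)
          show (G.1, (m.tA, s).2.map σ) = (m.tB, s.map m.σAB)
          rw [hGeq]
          exact Prod.ext rfl hssB
    · erw [Tri.edgeAdj_iff] at hadj
      obtain ⟨j, G, σ, hj, hg, rfl⟩ := hadj
      rcases huniqB j hj with hjv | hjv <;> rw [hjv] at hg hj
      · rw [show ((m.tB, s.map m.σAB).1, m.πB 0) = m.faceB from rfl, m.glue_faceB] at hg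
        obtain ⟨h2, h3⟩ := prodeq (Option.some.inj hg)
        left
        show (G.1, (m.tB, s.map m.σAB).2.map σ) = (m.tA, s)
        rw [← h2, ← h3]
        refine Prod.ext rfl ?_
        show (s.map m.σAB).map m.σAB⁻¹ = s
        rw [EdgePair.map_map]
        have : m.σAB⁻¹ * m.σAB = 1 := by group
        rw [this, EdgePair.map_one]
      · have hadj' := m.key hj hBkA hBkB hg
        have heq : m.tr G ((s.map m.σAB).map σ) = m.tr (m.tA, m.πA k) s := by
          refine T'.deg_one_unique h1 ?_
          have h5 := (T'.edgeOf_eq_of_adj hadj').symm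
          rwa [show m.tr ((m.tB, s.map m.σAB).1, m.πB kB) (m.tB, s.map m.σAB).2
              = m.tr (m.tA, m.πA k) s from hcoin] at h5
        obtain ⟨hGA, hGB⟩ := m.target_ok hBkA hBkB hg
        have hΦ1 : (m.Φ G).1 = (m.Φ (m.tA, m.πA k)).1 :=
          congrArg (fun z : T'.ModelEdge => z.1) heq
        rcases hfib G hGA hGB hΦ1 with hGeq | hGeq
        · left
          have he2 : ((s.map m.σAB).map σ).map (m.τ G) = s.map (m.τ (m.tA, m.πA k)) :=
            congrArg (fun z : T'.ModelEdge => z.2) heq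
          rw [hGeq] at he2
          have hss : (s.map m.σAB).map σ = s :=
            (EdgePair.map_left_inj _).1 he2
          show (G.1, (m.tB, s.map m.σAB).2.map σ) = (m.tA, s)
          rw [hGeq]
          exact Prod.ext rfl hss
        · exact absurd hGeq (T.glue_ne _ _ hg)
  exact T.class_closed _ hclosed (Or.inl rfl) he'

theorem σAB_def : m.σAB = m.πB * p23 * m.πA⁻¹ := rfl

theorem QPglue : T'.glue (m.tQ, m.πQ 3) = some ((m.tP, m.πP 2), (m.πQ * p23 * m.πP⁻¹)⁻¹) :=
  T'.glue_symm _ _ _ m.hPQglue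
theorem RQglue : T'.glue (m.tR, m.πR 3) = some ((m.tQ, m.πQ 2), (m.πR * p23 * m.πQ⁻¹)⁻¹) :=
  T'.glue_symm _ _ _ m.hQRglue
theorem PRglue : T'.glue (m.tP, m.πP 3) = some ((m.tR, m.πR 2), (m.πP * p23 * m.πR⁻¹)⁻¹) :=
  T'.glue_symm _ _ _ m.hRPglue

end Move23

theorem strip_pair' {v u : Finset (Fin 4)} {a : Perm (Fin 4)} (hs : v = u.image a)
    {k0 k1 : Fin 4} (h : ∀ y, y ∉ u → y = k0 ∨ y = k1) :
    ∀ x, x ∉ v → x = a k0 ∨ x = a k1 := by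
  intro x hx
  have hnm : a⁻¹ x ∉ u := by
    intro hm
    apply hx
    rw [hs]
    have h2 : a (a⁻¹ x) ∈ u.image a := Finset.mem_image_of_mem a hm
    rwa [a.apply_inv_self] at h2
  rcases h _ hnm with h' | h'
  · left; rw [← a.apply_inv_self x, h']
  · right; rw [← a.apply_inv_self x, h']

theorem strip_not_mem' {v u : Finset (Fin 4)} {a : Perm (Fin 4)} (hs : v = u.image a)
    {y : Fin 4} (h : y ∉ u) : a y ∉ v := by
  rw [hs]
  intro hm
  obtain ⟨z, hz, hzy⟩ := Finset.mem_image.1 hm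
  exact h (by rwa [← a.injective hzy])

theorem strip_mem' {v u : Finset (Fin 4)} {a : Perm (Fin 4)} (hs : v = u.image a)
    {y : Fin 4} (h : y ∈ u) : a y ∈ v := by
  rw [hs]; exact Finset.mem_image_of_mem a h

theorem repr_self {s : EdgePair} {a : Perm (Fin 4)} {u : Finset (Fin 4)}
    (h : (s.map a⁻¹).1 = u) : s.1 = u.image a := by
  rw [← h]
  show s.1 = (s.1.image _).image _
  rw [Finset.image_image]
  have hcomp : ⇑a ∘ ⇑a⁻¹ = id := funext fun x => a.apply_inv_self x
  rw [hcomp, Finset.image_id]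

theorem repr_map {s : EdgePair} {a : Perm (Fin 4)} {u : Finset (Fin 4)}
    (hs : s.1 = u.image a) (b c : Perm (Fin 4)) {v : Finset (Fin 4)}
    (hv : u.image c = v) :
    (s.map (b * c * a⁻¹)).1 = v.image b := by
  show s.1.image _ = _
  rw [hs, ← hv, Finset.image_image, Finset.image_image]
  apply Finset.image_congr
  intro y _
  simp [Perm.mul_apply]

theorem map_transfer {s : EdgePair} {a : Perm (Fin 4)} {u : Finset (Fin 4)}
    (hs : s.1 = u.image a) (π : Perm (Fin 4)) (c d : Perm (Fin 4))
    (h : ∀ y ∈ u, c y = d y) :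
    s.map (π * c * a⁻¹) = s.map (π * d * a⁻¹) := by
  apply EdgePair.ext
  show s.1.image _ = s.1.image _
  rw [hs, Finset.image_image, Finset.image_image]
  apply Finset.image_congr
  intro y hy
  simp only [Function.comp_apply, Perm.mul_apply, Perm.inv_apply_self]
  rw [h y hy]

theorem mem_inv_zero {s : EdgePair} {a : Perm (Fin 4)} {y : Fin 4}
    (h : a y ∉ s.1) : y ∉ (s.map a⁻¹).1 := by
  intro hm
  obtain ⟨x, hx, hx0⟩ := Finset.mem_image.1 hm
  apply h
  have hxy : x = a y := by
    rw [← hx0]; exact ((a.apply_inv_self x).symm)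
  exact hxy ▸ hx

theorem eqcases : ∀ u : Finset (Fin 4), u.card = 2 → (0 : Fin 4) ∉ u →
    u = {1, 2} ∨ u = {1, 3} ∨ u = {2, 3} := by decide

theorem sidecases : ∀ u : Finset (Fin 4), u.card = 2 → (0 : Fin 4) ∈ u →
    u = {0, 1} ∨ u = {0, 2} ∨ u = {0, 3} := by decide

namespace Move23

variable {T T' : Tri} (m : Move23 T T')

theorem eqA {s : EdgePair} {i : Fin 4} (h0 : m.πA 0 ∉ s.1) (hi : i ∉ s.1)
    (hiA : (m.tA, i) ≠ m.faceA) :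
    T.degree (T.edgeOf (m.tA, s)) ≠ 1 ∧
    (T'.degree (T'.edgeOf (m.tr (m.tA, i) s)) = 1 →
      T.degree (T.edgeOf (m.tA, s)) = 2) := by
  have hadjAB : T.edgeAdj (m.tA, s) (m.tB, s.map m.σAB) := by
    erw [Tri.edgeAdj_iff]
    exact ⟨m.πA 0, m.faceB, m.σAB, h0, m.glue_faceA, rfl⟩
  refine ⟨T.deg_ne_one (fun h => m.hAB (congrArg Prod.fst h))
    (T.edgeOf_eq_of_adj hadjAB).symm, ?_⟩
  intro h1
  have h0' : (0 : Fin 4) ∉ (s.map m.πA⁻¹).1 := mem_inv_zero h0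
  rcases eqcases (s.map m.πA⁻¹).1 (s.map m.πA⁻¹).2 h0' with hL | hL | hL
  · -- u = {1, 2}
    have hs : s.1 = ({1, 2} : Finset (Fin 4)).image m.πA := repr_self hL
    have hik : i = m.πA 3 := by
      rcases strip_pair' hs
        (by decide : ∀ y : Fin 4, y ∉ ({1, 2} : Finset (Fin 4)) → y = 0 ∨ y = 3) i hi with
        h | h
      · exact absurd (by rw [h]; exact rfl : (m.tA, i) = m.faceA) hiA
      · exact h
    rw [hik] at h1
    refine m.eq_worker (k := 3) (kB := 2) (by decide) (by decide) h0 ?_ ?_ ?_ ?_ h1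
    · exact strip_pair' hs (by decide)
    · have hsB : (s.map m.σAB).1 = ({1, 3} : Finset (Fin 4)).image m.πB := by
        rw [m.σAB_def]
        exact repr_map hs m.πB p23 (by decide)
      exact strip_pair' hsB
        (by decide : ∀ y : Fin 4, y ∉ ({1, 3} : Finset (Fin 4)) → y = 0 ∨ y = 2)
    · intro G hGA hGB hΦ
      rw [m.ΦA3] at hΦ
      exact m.fiber_P hGA hGB hΦ
    · refine Prod.ext ?_ ?_
      · show (m.Φ (m.tB, m.πB 2)).1 = (m.Φ (m.tA, m.πA 3)).1
        rw [m.ΦB2, m.ΦA3]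
      · show ((s.map m.σAB).map (m.τ (m.tB, m.πB 2)) : EdgePair) = s.map (m.τ (m.tA, m.πA 3))
        rw [EdgePair.map_map, m.τB2, m.τA3]
        rw [show m.πP * c012 * m.πB⁻¹ * m.σAB = m.πP * (c012 * p23) * m.πA⁻¹ by
          rw [m.σAB_def]; group]
        exact map_transfer hs _ _ _ (by decide)
  · -- u = {1, 3}
    have hs : s.1 = ({1, 3} : Finset (Fin 4)).image m.πA := repr_self hL
    have hik : i = m.πA 2 := by
      rcases strip_pair' hs
        (by decide : ∀ y : Fin 4, y ∉ ({1, 3} : Finset (Fin 4)) → y = 0 ∨ y = 2) i hi with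
        h | h
      · exact absurd (by rw [h]; exact rfl : (m.tA, i) = m.faceA) hiA
      · exact h
    rw [hik] at h1
    refine m.eq_worker (k := 2) (kB := 3) (by decide) (by decide) h0 ?_ ?_ ?_ ?_ h1
    · exact strip_pair' hs (by decide)
    · have hsB : (s.map m.σAB).1 = ({1, 2} : Finset (Fin 4)).image m.πB := by
        rw [m.σAB_def]
        exact repr_map hs m.πB p23 (by decide)
      exact strip_pair' hsB
        (by decide : ∀ y : Fin 4, y ∉ ({1, 2} : Finset (Fin 4)) → y = 0 ∨ y = 3)
    · intro G hGA hGB hΦ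
      rw [m.ΦA2] at hΦ
      exact m.fiber_R hGA hGB hΦ
    · refine Prod.ext ?_ ?_
      · show (m.Φ (m.tB, m.πB 3)).1 = (m.Φ (m.tA, m.πA 2)).1
        rw [m.ΦB3, m.ΦA2]
      · show ((s.map m.σAB).map (m.τ (m.tB, m.πB 3)) : EdgePair) = s.map (m.τ (m.tA, m.πA 2))
        rw [EdgePair.map_map, m.τB3, m.τA2]
        rw [show m.πR * c013 * m.πB⁻¹ * m.σAB = m.πR * (c013 * p23) * m.πA⁻¹ by
          rw [m.σAB_def]; group]
        exact map_transfer hs _ _ _ (by decide)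
  · -- u = {2, 3}
    have hs : s.1 = ({2, 3} : Finset (Fin 4)).image m.πA := repr_self hL
    have hik : i = m.πA 1 := by
      rcases strip_pair' hs
        (by decide : ∀ y : Fin 4, y ∉ ({2, 3} : Finset (Fin 4)) → y = 0 ∨ y = 1) i hi with
        h | h
      · exact absurd (by rw [h]; exact rfl : (m.tA, i) = m.faceA) hiA
      · exact h
    rw [hik] at h1
    refine m.eq_worker (k := 1) (kB := 1) (by decide) (by decide) h0 ?_ ?_ ?_ ?_ h1
    · exact strip_pair' hs (by decide)
    · have hsB : (s.map m.σAB).1 = ({2, 3} : Finset (Fin 4)).image m.πB := by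
        rw [m.σAB_def]
        exact repr_map hs m.πB p23 (by decide)
      exact strip_pair' hsB
        (by decide : ∀ y : Fin 4, y ∉ ({2, 3} : Finset (Fin 4)) → y = 0 ∨ y = 1)
    · intro G hGA hGB hΦ
      rw [m.ΦA1] at hΦ
      exact m.fiber_Q hGA hGB hΦ
    · refine Prod.ext ?_ ?_
      · show (m.Φ (m.tB, m.πB 1)).1 = (m.Φ (m.tA, m.πA 1)).1
        rw [m.ΦB1, m.ΦA1]
      · show ((s.map m.σAB).map (m.τ (m.tB, m.πB 1)) : EdgePair) = s.map (m.τ (m.tA, m.πA 1))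
        rw [EdgePair.map_map, m.τB1, m.τA1]
        rw [show m.πQ * m.πA⁻¹ = m.πQ * (1 : Perm (Fin 4)) * m.πA⁻¹ by group]
        rw [show m.πQ * c01x23 * m.πB⁻¹ * m.σAB = m.πQ * (c01x23 * p23) * m.πA⁻¹ by
          rw [m.σAB_def]; group]
        exact map_transfer hs _ _ _ (by decide)

theorem eqB {s : EdgePair} {i : Fin 4} (h0 : m.πB 0 ∉ s.1) (hi : i ∉ s.1)
    (hiB : (m.tB, i) ≠ m.faceB) :
    T.degree (T.edgeOf (m.tB, s)) ≠ 1 ∧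
    (T'.degree (T'.edgeOf (m.tr (m.tB, i) s)) = 1 →
      T.degree (T.edgeOf (m.tB, s)) = 2) := by
  have hadjBA : T.edgeAdj (m.tB, s) (m.tA, s.map m.σAB⁻¹) := by
    erw [Tri.edgeAdj_iff]
    exact ⟨m.πB 0, m.faceA, m.σAB⁻¹, h0, m.glue_faceB, rfl⟩
  refine ⟨T.deg_ne_one (fun h => m.hAB (congrArg Prod.fst h).symm)
    (T.edgeOf_eq_of_adj hadjBA).symm, ?_⟩
  intro h1
  have hss' : (s.map m.σAB⁻¹).map m.σAB = s := by
    rw [EdgePair.map_map, show m.σAB * m.σAB⁻¹ = 1 by group, EdgePair.map_one]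
  have hinv : m.σAB⁻¹ = m.πA * p23⁻¹ * m.πB⁻¹ := by rw [m.σAB_def]; group
  rw [T.edgeOf_eq_of_adj hadjBA]
  have h0' : (0 : Fin 4) ∉ (s.map m.πB⁻¹).1 := mem_inv_zero h0
  rcases eqcases (s.map m.πB⁻¹).1 (s.map m.πB⁻¹).2 h0' with hL | hL | hL
  · have hs : s.1 = ({1, 2} : Finset (Fin 4)).image m.πB := repr_self hL
    have hsA : (s.map m.σAB⁻¹).1 = ({1, 3} : Finset (Fin 4)).image m.πA := by
      rw [hinv]
      exact repr_map hs m.πA p23⁻¹ (by decide)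
    have hik : i = m.πB 3 := by
      rcases strip_pair' hs
        (by decide : ∀ y : Fin 4, y ∉ ({1, 2} : Finset (Fin 4)) → y = 0 ∨ y = 3) i hi with
        h | h
      · exact absurd (by rw [h]; exact rfl : (m.tB, i) = m.faceB) hiB
      · exact h
    rw [hik] at h1
    have hcoin : m.tr (m.tB, m.πB 3) ((s.map m.σAB⁻¹).map m.σAB)
        = m.tr (m.tA, m.πA 2) (s.map m.σAB⁻¹) := by
      refine Prod.ext ?_ ?_
      · show (m.Φ (m.tB, m.πB 3)).1 = (m.Φ (m.tA, m.πA 2)).1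
        rw [m.ΦB3, m.ΦA2]
      · show (((s.map m.σAB⁻¹).map m.σAB).map (m.τ (m.tB, m.πB 3)))
            = (s.map m.σAB⁻¹).map (m.τ (m.tA, m.πA 2))
        rw [hss', m.τB3, m.τA2, EdgePair.map_map]
        rw [show m.πR * c132 * m.πA⁻¹ * m.σAB⁻¹ = m.πR * (c132 * p23⁻¹) * m.πB⁻¹ by
          rw [m.σAB_def]; group]
        exact map_transfer hs _ _ _ (by decide)
    have hcoinS := hcoin
    rw [hss'] at hcoinS
    rw [hcoinS] at h1
    refine m.eq_worker (k := 2) (kB := 3) (by decide) (by decide) ?_ ?_ ?_ ?_ hcoin h1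
    · exact strip_not_mem' hsA (by decide : (0 : Fin 4) ∉ ({1, 3} : Finset (Fin 4)))
    · exact strip_pair' hsA
        (by decide : ∀ y : Fin 4, y ∉ ({1, 3} : Finset (Fin 4)) → y = 0 ∨ y = 2)
    · intro x hx
      rw [hss'] at hx
      exact strip_pair' hs
        (by decide : ∀ y : Fin 4, y ∉ ({1, 2} : Finset (Fin 4)) → y = 0 ∨ y = 3) x hx
    · intro G hGA hGB hΦ
      rw [m.ΦA2] at hΦ
      exact m.fiber_R hGA hGB hΦ
  · have hs : s.1 = ({1, 3} : Finset (Fin 4)).image m.πB := repr_self hL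
    have hsA : (s.map m.σAB⁻¹).1 = ({1, 2} : Finset (Fin 4)).image m.πA := by
      rw [hinv]
      exact repr_map hs m.πA p23⁻¹ (by decide)
    have hik : i = m.πB 2 := by
      rcases strip_pair' hs
        (by decide : ∀ y : Fin 4, y ∉ ({1, 3} : Finset (Fin 4)) → y = 0 ∨ y = 2) i hi with
        h | h
      · exact absurd (by rw [h]; exact rfl : (m.tB, i) = m.faceB) hiB
      · exact h
    rw [hik] at h1
    have hcoin : m.tr (m.tB, m.πB 2) ((s.map m.σAB⁻¹).map m.σAB)
        = m.tr (m.tA, m.πA 3) (s.map m.σAB⁻¹) := by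
      refine Prod.ext ?_ ?_
      · show (m.Φ (m.tB, m.πB 2)).1 = (m.Φ (m.tA, m.πA 3)).1
        rw [m.ΦB2, m.ΦA3]
      · show (((s.map m.σAB⁻¹).map m.σAB).map (m.τ (m.tB, m.πB 2)))
            = (s.map m.σAB⁻¹).map (m.τ (m.tA, m.πA 3))
        rw [hss', m.τB2, m.τA3, EdgePair.map_map]
        rw [show m.πP * c123 * m.πA⁻¹ * m.σAB⁻¹ = m.πP * (c123 * p23⁻¹) * m.πB⁻¹ by
          rw [m.σAB_def]; group]
        exact map_transfer hs _ _ _ (by decide)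
    have hcoinS := hcoin
    rw [hss'] at hcoinS
    rw [hcoinS] at h1
    refine m.eq_worker (k := 3) (kB := 2) (by decide) (by decide) ?_ ?_ ?_ ?_ hcoin h1
    · exact strip_not_mem' hsA (by decide : (0 : Fin 4) ∉ ({1, 2} : Finset (Fin 4)))
    · exact strip_pair' hsA
        (by decide : ∀ y : Fin 4, y ∉ ({1, 2} : Finset (Fin 4)) → y = 0 ∨ y = 3)
    · intro x hx
      rw [hss'] at hx
      exact strip_pair' hs
        (by decide : ∀ y : Fin 4, y ∉ ({1, 3} : Finset (Fin 4)) → y = 0 ∨ y = 2) x hx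
    · intro G hGA hGB hΦ
      rw [m.ΦA3] at hΦ
      exact m.fiber_P hGA hGB hΦ
  · have hs : s.1 = ({2, 3} : Finset (Fin 4)).image m.πB := repr_self hL
    have hsA : (s.map m.σAB⁻¹).1 = ({2, 3} : Finset (Fin 4)).image m.πA := by
      rw [hinv]
      exact repr_map hs m.πA p23⁻¹ (by decide)
    have hik : i = m.πB 1 := by
      rcases strip_pair' hs
        (by decide : ∀ y : Fin 4, y ∉ ({2, 3} : Finset (Fin 4)) → y = 0 ∨ y = 1) i hi with
        h | h
      · exact absurd (by rw [h]; exact rfl : (m.tB, i) = m.faceB) hiB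
      · exact h
    rw [hik] at h1
    have hcoin : m.tr (m.tB, m.πB 1) ((s.map m.σAB⁻¹).map m.σAB)
        = m.tr (m.tA, m.πA 1) (s.map m.σAB⁻¹) := by
      refine Prod.ext ?_ ?_
      · show (m.Φ (m.tB, m.πB 1)).1 = (m.Φ (m.tA, m.πA 1)).1
        rw [m.ΦB1, m.ΦA1]
      · show (((s.map m.σAB⁻¹).map m.σAB).map (m.τ (m.tB, m.πB 1)))
            = (s.map m.σAB⁻¹).map (m.τ (m.tA, m.πA 1))
        rw [hss', m.τB1, m.τA1, EdgePair.map_map]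
        rw [show m.πQ * m.πA⁻¹ * m.σAB⁻¹ = m.πQ * ((1 : Perm (Fin 4)) * p23⁻¹) * m.πB⁻¹ by
          rw [m.σAB_def]; group]
        exact map_transfer hs _ _ _ (by decide)
    have hcoinS := hcoin
    rw [hss'] at hcoinS
    rw [hcoinS] at h1
    refine m.eq_worker (k := 1) (kB := 1) (by decide) (by decide) ?_ ?_ ?_ ?_ hcoin h1
    · exact strip_not_mem' hsA (by decide : (0 : Fin 4) ∉ ({2, 3} : Finset (Fin 4)))
    · exact strip_pair' hsA
        (by decide : ∀ y : Fin 4, y ∉ ({2, 3} : Finset (Fin 4)) → y = 0 ∨ y = 1)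
    · intro x hx
      rw [hss'] at hx
      exact strip_pair' hs
        (by decide : ∀ y : Fin 4, y ∉ ({2, 3} : Finset (Fin 4)) → y = 0 ∨ y = 1) x hx
    · intro G hGA hGB hΦ
      rw [m.ΦA1] at hΦ
      exact m.fiber_Q hGA hGB hΦ

theorem sideA {s : EdgePair} {i : Fin 4} (h0 : m.πA 0 ∈ s.1) (hi : i ∉ s.1)
    (hiA : (m.tA, i) ≠ m.faceA) :
    T'.degree (T'.edgeOf (m.tr (m.tA, i) s)) ≠ 1 ∧
    (T.degree (T.edgeOf (m.tA, s)) = 1 →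
      T'.degree (T'.edgeOf (m.tr (m.tA, i) s)) = 2) := by
  have h0' : (0 : Fin 4) ∈ (s.map m.πA⁻¹).1 :=
    Finset.mem_image.2 ⟨m.πA 0, h0, m.πA.inv_apply_self 0⟩
  rcases sidecases (s.map m.πA⁻¹).1 (s.map m.πA⁻¹).2 h0' with hL | hL | hL
  · have hs : s.1 = ({0, 1} : Finset (Fin 4)).image m.πA := repr_self hL
    have hsf1 : (m.tr (m.tA, m.πA 2) s).2.1 = ({0, 3} : Finset (Fin 4)).image m.πR := by
      show (s.map (m.τ (m.tA, m.πA 2))).1 = _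
      rw [m.τA2]
      exact repr_map hs m.πR c132 (by decide)
    have hsf2 : (m.tr (m.tA, m.πA 3) s).2.1 = ({0, 2} : Finset (Fin 4)).image m.πP := by
      show (s.map (m.τ (m.tA, m.πA 3))).1 = _
      rw [m.τA3]
      exact repr_map hs m.πP c123 (by decide)
    have hτv1 : m.τ (m.tA, m.πA 2) (m.πA 2) = m.πR 1 := by
      rw [m.τA2]
      simp only [Perm.mul_apply, Perm.inv_apply_self]
      try exact congrArg m.πR (by decide)
    have hτv2 : m.τ (m.tA, m.πA 3) (m.πA 3) = m.πP 1 := by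
      rw [m.τA3]
      simp only [Perm.mul_apply, Perm.inv_apply_self]
      try exact congrArg m.πP (by decide)
    have hw := m.side_worker (t0 := m.tA) (i1 := m.πA 2) (i2 := m.πA 3) (s := s)
      (fun h => absurd (m.πA.injective (congrArg Prod.snd h)) (by decide)) (fun h => m.hAB (congrArg Prod.fst h))
      (fun h => absurd (m.πA.injective (congrArg Prod.snd h)) (by decide)) (fun h => m.hAB (congrArg Prod.fst h))
      (strip_not_mem' hs (by decide)) (strip_not_mem' hs (by decide))
      (strip_pair' hs (by decide : ∀ y : Fin 4, y ∉ ({0, 1} : Finset (Fin 4)) → y = 2 ∨ y = 3))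
      (by rw [m.ΦA2, m.ΦA3]; exact fun h => m.hPR h.symm)
      (strip_not_mem' hsf1 (by decide : (2 : Fin 4) ∉ ({0, 3} : Finset (Fin 4))))
      (by rw [m.ΦA2]; exact m.hRPglue)
      (by rw [m.ΦA3])
      (by
        show (s.map (m.τ (m.tA, m.πA 2))).map _ = s.map (m.τ (m.tA, m.πA 3))
        rw [m.τA2, m.τA3, EdgePair.map_map]
        rw [show (m.πP * p23 * m.πR⁻¹) * (m.πR * c132 * m.πA⁻¹) = m.πP * (p23 * c132) * m.πA⁻¹ from by group]
        exact map_transfer hs _ _ _ (by decide))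
      (by rw [m.ΦA3]; exact m.PRglue)
      (by rw [m.ΦA2])
      (by
        show (s.map (m.τ (m.tA, m.πA 3))).map _ = s.map (m.τ (m.tA, m.πA 2))
        rw [m.τA3, m.τA2, EdgePair.map_map]
        rw [show ((m.πP * p23 * m.πR⁻¹)⁻¹) * (m.πP * c123 * m.πA⁻¹) = m.πR * (p23⁻¹ * c123) * m.πA⁻¹ from by group]
        exact map_transfer hs _ _ _ (by decide))
      (by
        intro x hx
        rcases strip_pair' hsf1
          (by decide : ∀ y : Fin 4, y ∉ ({0, 3} : Finset (Fin 4)) → y = 2 ∨ y = 1) x hx with h | h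
        · exact Or.inl (by rw [h])
        · exact Or.inr (by rw [h, hτv1])
      )
      (by
        intro x hx
        rcases strip_pair' hsf2
          (by decide : ∀ y : Fin 4, y ∉ ({0, 2} : Finset (Fin 4)) → y = 3 ∨ y = 1) x hx with h | h
        · exact Or.inl (by rw [h])
        · exact Or.inr (by rw [h, hτv2])
      )
    rcases strip_pair' hs
      (by decide : ∀ y : Fin 4, y ∉ ({0, 1} : Finset (Fin 4)) → y = 2 ∨ y = 3) i hi with hik | hik
    · rw [hik]
      exact ⟨hw.1, hw.2.1⟩
    · rw [hik, hw.2.2]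
      exact ⟨hw.1, hw.2.1⟩
  · have hs : s.1 = ({0, 2} : Finset (Fin 4)).image m.πA := repr_self hL
    have hsf1 : (m.tr (m.tA, m.πA 1) s).2.1 = ({0, 2} : Finset (Fin 4)).image m.πQ := by
      show (s.map (m.τ (m.tA, m.πA 1))).1 = _
      rw [m.τA1]
      rw [show m.πQ * m.πA⁻¹ = m.πQ * (1 : Perm (Fin 4)) * m.πA⁻¹ from by group]
      exact repr_map hs m.πQ (1 : Perm (Fin 4)) (by decide)
    have hsf2 : (m.tr (m.tA, m.πA 3) s).2.1 = ({0, 3} : Finset (Fin 4)).image m.πP := by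
      show (s.map (m.τ (m.tA, m.πA 3))).1 = _
      rw [m.τA3]
      exact repr_map hs m.πP c123 (by decide)
    have hτv1 : m.τ (m.tA, m.πA 1) (m.πA 1) = m.πQ 1 := by
      rw [m.τA1]
      simp only [Perm.mul_apply, Perm.inv_apply_self]
      try exact congrArg m.πQ (by decide)
    have hτv2 : m.τ (m.tA, m.πA 3) (m.πA 3) = m.πP 1 := by
      rw [m.τA3]
      simp only [Perm.mul_apply, Perm.inv_apply_self]
      try exact congrArg m.πP (by decide)
    have hw := m.side_worker (t0 := m.tA) (i1 := m.πA 1) (i2 := m.πA 3) (s := s)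
      (fun h => absurd (m.πA.injective (congrArg Prod.snd h)) (by decide)) (fun h => m.hAB (congrArg Prod.fst h))
      (fun h => absurd (m.πA.injective (congrArg Prod.snd h)) (by decide)) (fun h => m.hAB (congrArg Prod.fst h))
      (strip_not_mem' hs (by decide)) (strip_not_mem' hs (by decide))
      (strip_pair' hs (by decide : ∀ y : Fin 4, y ∉ ({0, 2} : Finset (Fin 4)) → y = 1 ∨ y = 3))
      (by rw [m.ΦA1, m.ΦA3]; exact fun h => m.hPQ h.symm)
      (strip_not_mem' hsf1 (by decide : (3 : Fin 4) ∉ ({0, 2} : Finset (Fin 4))))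
      (by rw [m.ΦA1]; exact m.QPglue)
      (by rw [m.ΦA3])
      (by
        show (s.map (m.τ (m.tA, m.πA 1))).map _ = s.map (m.τ (m.tA, m.πA 3))
        rw [m.τA1, m.τA3, EdgePair.map_map]
        rw [show ((m.πQ * p23 * m.πP⁻¹)⁻¹) * (m.πQ * m.πA⁻¹) = m.πP * (p23⁻¹ * 1) * m.πA⁻¹ from by group]
        exact map_transfer hs _ _ _ (by decide))
      (by rw [m.ΦA3]; exact m.hPQglue)
      (by rw [m.ΦA1])
      (by
        show (s.map (m.τ (m.tA, m.πA 3))).map _ = s.map (m.τ (m.tA, m.πA 1))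
        rw [m.τA3, m.τA1, EdgePair.map_map]
        rw [show m.πQ * m.πA⁻¹ = m.πQ * (1 : Perm (Fin 4)) * m.πA⁻¹ from by group]
        rw [show (m.πQ * p23 * m.πP⁻¹) * (m.πP * c123 * m.πA⁻¹) = m.πQ * (p23 * c123) * m.πA⁻¹ from by group]
        exact map_transfer hs _ _ _ (by decide))
      (by
        intro x hx
        rcases strip_pair' hsf1
          (by decide : ∀ y : Fin 4, y ∉ ({0, 2} : Finset (Fin 4)) → y = 3 ∨ y = 1) x hx with h | h
        · exact Or.inl (by rw [h])
        · exact Or.inr (by rw [h, hτv1])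
      )
      (by
        intro x hx
        rcases strip_pair' hsf2
          (by decide : ∀ y : Fin 4, y ∉ ({0, 3} : Finset (Fin 4)) → y = 2 ∨ y = 1) x hx with h | h
        · exact Or.inl (by rw [h])
        · exact Or.inr (by rw [h, hτv2])
      )
    rcases strip_pair' hs
      (by decide : ∀ y : Fin 4, y ∉ ({0, 2} : Finset (Fin 4)) → y = 1 ∨ y = 3) i hi with hik | hik
    · rw [hik]
      exact ⟨hw.1, hw.2.1⟩
    · rw [hik, hw.2.2]
      exact ⟨hw.1, hw.2.1⟩
  · have hs : s.1 = ({0, 3} : Finset (Fin 4)).image m.πA := repr_self hL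
    have hsf1 : (m.tr (m.tA, m.πA 1) s).2.1 = ({0, 3} : Finset (Fin 4)).image m.πQ := by
      show (s.map (m.τ (m.tA, m.πA 1))).1 = _
      rw [m.τA1]
      rw [show m.πQ * m.πA⁻¹ = m.πQ * (1 : Perm (Fin 4)) * m.πA⁻¹ from by group]
      exact repr_map hs m.πQ (1 : Perm (Fin 4)) (by decide)
    have hsf2 : (m.tr (m.tA, m.πA 2) s).2.1 = ({0, 2} : Finset (Fin 4)).image m.πR := by
      show (s.map (m.τ (m.tA, m.πA 2))).1 = _
      rw [m.τA2]
      exact repr_map hs m.πR c132 (by decide)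
    have hτv1 : m.τ (m.tA, m.πA 1) (m.πA 1) = m.πQ 1 := by
      rw [m.τA1]
      simp only [Perm.mul_apply, Perm.inv_apply_self]
      try exact congrArg m.πQ (by decide)
    have hτv2 : m.τ (m.tA, m.πA 2) (m.πA 2) = m.πR 1 := by
      rw [m.τA2]
      simp only [Perm.mul_apply, Perm.inv_apply_self]
      try exact congrArg m.πR (by decide)
    have hw := m.side_worker (t0 := m.tA) (i1 := m.πA 1) (i2 := m.πA 2) (s := s)
      (fun h => absurd (m.πA.injective (congrArg Prod.snd h)) (by decide)) (fun h => m.hAB (congrArg Prod.fst h))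
      (fun h => absurd (m.πA.injective (congrArg Prod.snd h)) (by decide)) (fun h => m.hAB (congrArg Prod.fst h))
      (strip_not_mem' hs (by decide)) (strip_not_mem' hs (by decide))
      (strip_pair' hs (by decide : ∀ y : Fin 4, y ∉ ({0, 3} : Finset (Fin 4)) → y = 1 ∨ y = 2))
      (by rw [m.ΦA1, m.ΦA2]; exact m.hQR)
      (strip_not_mem' hsf1 (by decide : (2 : Fin 4) ∉ ({0, 3} : Finset (Fin 4))))
      (by rw [m.ΦA1]; exact m.hQRglue)
      (by rw [m.ΦA2])
      (by
        show (s.map (m.τ (m.tA, m.πA 1))).map _ = s.map (m.τ (m.tA, m.πA 2))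
        rw [m.τA1, m.τA2, EdgePair.map_map]
        rw [show (m.πR * p23 * m.πQ⁻¹) * (m.πQ * m.πA⁻¹) = m.πR * (p23 * 1) * m.πA⁻¹ from by group]
        exact map_transfer hs _ _ _ (by decide))
      (by rw [m.ΦA2]; exact m.RQglue)
      (by rw [m.ΦA1])
      (by
        show (s.map (m.τ (m.tA, m.πA 2))).map _ = s.map (m.τ (m.tA, m.πA 1))
        rw [m.τA2, m.τA1, EdgePair.map_map]
        rw [show m.πQ * m.πA⁻¹ = m.πQ * (1 : Perm (Fin 4)) * m.πA⁻¹ from by group]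
        rw [show ((m.πR * p23 * m.πQ⁻¹)⁻¹) * (m.πR * c132 * m.πA⁻¹) = m.πQ * (p23⁻¹ * c132) * m.πA⁻¹ from by group]
        exact map_transfer hs _ _ _ (by decide))
      (by
        intro x hx
        rcases strip_pair' hsf1
          (by decide : ∀ y : Fin 4, y ∉ ({0, 3} : Finset (Fin 4)) → y = 2 ∨ y = 1) x hx with h | h
        · exact Or.inl (by rw [h])
        · exact Or.inr (by rw [h, hτv1])
      )
      (by
        intro x hx
        rcases strip_pair' hsf2
          (by decide : ∀ y : Fin 4, y ∉ ({0, 2} : Finset (Fin 4)) → y = 3 ∨ y = 1) x hx with h | h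
        · exact Or.inl (by rw [h])
        · exact Or.inr (by rw [h, hτv2])
      )
    rcases strip_pair' hs
      (by decide : ∀ y : Fin 4, y ∉ ({0, 3} : Finset (Fin 4)) → y = 1 ∨ y = 2) i hi with hik | hik
    · rw [hik]
      exact ⟨hw.1, hw.2.1⟩
    · rw [hik, hw.2.2]
      exact ⟨hw.1, hw.2.1⟩

theorem sideB {s : EdgePair} {i : Fin 4} (h0 : m.πB 0 ∈ s.1) (hi : i ∉ s.1)
    (hiB : (m.tB, i) ≠ m.faceB) :
    T'.degree (T'.edgeOf (m.tr (m.tB, i) s)) ≠ 1 ∧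
    (T.degree (T.edgeOf (m.tB, s)) = 1 →
      T'.degree (T'.edgeOf (m.tr (m.tB, i) s)) = 2) := by
  have h0' : (0 : Fin 4) ∈ (s.map m.πB⁻¹).1 :=
    Finset.mem_image.2 ⟨m.πB 0, h0, m.πB.inv_apply_self 0⟩
  rcases sidecases (s.map m.πB⁻¹).1 (s.map m.πB⁻¹).2 h0' with hL | hL | hL
  · have hs : s.1 = ({0, 1} : Finset (Fin 4)).image m.πB := repr_self hL
    have hsf1 : (m.tr (m.tB, m.πB 2) s).2.1 = ({1, 2} : Finset (Fin 4)).image m.πP := by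
      show (s.map (m.τ (m.tB, m.πB 2))).1 = _
      rw [m.τB2]
      exact repr_map hs m.πP c012 (by decide)
    have hsf2 : (m.tr (m.tB, m.πB 3) s).2.1 = ({1, 3} : Finset (Fin 4)).image m.πR := by
      show (s.map (m.τ (m.tB, m.πB 3))).1 = _
      rw [m.τB3]
      exact repr_map hs m.πR c013 (by decide)
    have hτv1 : m.τ (m.tB, m.πB 2) (m.πB 2) = m.πP 0 := by
      rw [m.τB2]
      simp only [Perm.mul_apply, Perm.inv_apply_self]
      try exact congrArg m.πP (by decide)
    have hτv2 : m.τ (m.tB, m.πB 3) (m.πB 3) = m.πR 0 := by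
      rw [m.τB3]
      simp only [Perm.mul_apply, Perm.inv_apply_self]
      try exact congrArg m.πR (by decide)
    have hw := m.side_worker (t0 := m.tB) (i1 := m.πB 2) (i2 := m.πB 3) (s := s)
      (fun h => m.hAB (congrArg Prod.fst h).symm) (fun h => absurd (m.πB.injective (congrArg Prod.snd h)) (by decide))
      (fun h => m.hAB (congrArg Prod.fst h).symm) (fun h => absurd (m.πB.injective (congrArg Prod.snd h)) (by decide))
      (strip_not_mem' hs (by decide)) (strip_not_mem' hs (by decide))
      (strip_pair' hs (by decide : ∀ y : Fin 4, y ∉ ({0, 1} : Finset (Fin 4)) → y = 2 ∨ y = 3))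
      (by rw [m.ΦB2, m.ΦB3]; exact m.hPR)
      (strip_not_mem' hsf1 (by decide : (3 : Fin 4) ∉ ({1, 2} : Finset (Fin 4))))
      (by rw [m.ΦB2]; exact m.PRglue)
      (by rw [m.ΦB3])
      (by
        show (s.map (m.τ (m.tB, m.πB 2))).map _ = s.map (m.τ (m.tB, m.πB 3))
        rw [m.τB2, m.τB3, EdgePair.map_map]
        rw [show ((m.πP * p23 * m.πR⁻¹)⁻¹) * (m.πP * c012 * m.πB⁻¹) = m.πR * (p23⁻¹ * c012) * m.πB⁻¹ from by group]
        exact map_transfer hs _ _ _ (by decide))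
      (by rw [m.ΦB3]; exact m.hRPglue)
      (by rw [m.ΦB2])
      (by
        show (s.map (m.τ (m.tB, m.πB 3))).map _ = s.map (m.τ (m.tB, m.πB 2))
        rw [m.τB3, m.τB2, EdgePair.map_map]
        rw [show (m.πP * p23 * m.πR⁻¹) * (m.πR * c013 * m.πB⁻¹) = m.πP * (p23 * c013) * m.πB⁻¹ from by group]
        exact map_transfer hs _ _ _ (by decide))
      (by
        intro x hx
        rcases strip_pair' hsf1
          (by decide : ∀ y : Fin 4, y ∉ ({1, 2} : Finset (Fin 4)) → y = 3 ∨ y = 0) x hx with h | h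
        · exact Or.inl (by rw [h])
        · exact Or.inr (by rw [h, hτv1])
      )
      (by
        intro x hx
        rcases strip_pair' hsf2
          (by decide : ∀ y : Fin 4, y ∉ ({1, 3} : Finset (Fin 4)) → y = 2 ∨ y = 0) x hx with h | h
        · exact Or.inl (by rw [h])
        · exact Or.inr (by rw [h, hτv2])
      )
    rcases strip_pair' hs
      (by decide : ∀ y : Fin 4, y ∉ ({0, 1} : Finset (Fin 4)) → y = 2 ∨ y = 3) i hi with hik | hik
    · rw [hik]
      exact ⟨hw.1, hw.2.1⟩
    · rw [hik, hw.2.2]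
      exact ⟨hw.1, hw.2.1⟩
  · have hs : s.1 = ({0, 2} : Finset (Fin 4)).image m.πB := repr_self hL
    have hsf1 : (m.tr (m.tB, m.πB 1) s).2.1 = ({1, 3} : Finset (Fin 4)).image m.πQ := by
      show (s.map (m.τ (m.tB, m.πB 1))).1 = _
      rw [m.τB1]
      exact repr_map hs m.πQ c01x23 (by decide)
    have hsf2 : (m.tr (m.tB, m.πB 3) s).2.1 = ({1, 2} : Finset (Fin 4)).image m.πR := by
      show (s.map (m.τ (m.tB, m.πB 3))).1 = _
      rw [m.τB3]
      exact repr_map hs m.πR c013 (by decide)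
    have hτv1 : m.τ (m.tB, m.πB 1) (m.πB 1) = m.πQ 0 := by
      rw [m.τB1]
      simp only [Perm.mul_apply, Perm.inv_apply_self]
      try exact congrArg m.πQ (by decide)
    have hτv2 : m.τ (m.tB, m.πB 3) (m.πB 3) = m.πR 0 := by
      rw [m.τB3]
      simp only [Perm.mul_apply, Perm.inv_apply_self]
      try exact congrArg m.πR (by decide)
    have hw := m.side_worker (t0 := m.tB) (i1 := m.πB 1) (i2 := m.πB 3) (s := s)
      (fun h => m.hAB (congrArg Prod.fst h).symm) (fun h => absurd (m.πB.injective (congrArg Prod.snd h)) (by decide))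
      (fun h => m.hAB (congrArg Prod.fst h).symm) (fun h => absurd (m.πB.injective (congrArg Prod.snd h)) (by decide))
      (strip_not_mem' hs (by decide)) (strip_not_mem' hs (by decide))
      (strip_pair' hs (by decide : ∀ y : Fin 4, y ∉ ({0, 2} : Finset (Fin 4)) → y = 1 ∨ y = 3))
      (by rw [m.ΦB1, m.ΦB3]; exact m.hQR)
      (strip_not_mem' hsf1 (by decide : (2 : Fin 4) ∉ ({1, 3} : Finset (Fin 4))))
      (by rw [m.ΦB1]; exact m.hQRglue)
      (by rw [m.ΦB3])
      (by
        show (s.map (m.τ (m.tB, m.πB 1))).map _ = s.map (m.τ (m.tB, m.πB 3))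
        rw [m.τB1, m.τB3, EdgePair.map_map]
        rw [show (m.πR * p23 * m.πQ⁻¹) * (m.πQ * c01x23 * m.πB⁻¹) = m.πR * (p23 * c01x23) * m.πB⁻¹ from by group]
        exact map_transfer hs _ _ _ (by decide))
      (by rw [m.ΦB3]; exact m.RQglue)
      (by rw [m.ΦB1])
      (by
        show (s.map (m.τ (m.tB, m.πB 3))).map _ = s.map (m.τ (m.tB, m.πB 1))
        rw [m.τB3, m.τB1, EdgePair.map_map]
        rw [show ((m.πR * p23 * m.πQ⁻¹)⁻¹) * (m.πR * c013 * m.πB⁻¹) = m.πQ * (p23⁻¹ * c013) * m.πB⁻¹ from by group]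
        exact map_transfer hs _ _ _ (by decide))
      (by
        intro x hx
        rcases strip_pair' hsf1
          (by decide : ∀ y : Fin 4, y ∉ ({1, 3} : Finset (Fin 4)) → y = 2 ∨ y = 0) x hx with h | h
        · exact Or.inl (by rw [h])
        · exact Or.inr (by rw [h, hτv1])
      )
      (by
        intro x hx
        rcases strip_pair' hsf2
          (by decide : ∀ y : Fin 4, y ∉ ({1, 2} : Finset (Fin 4)) → y = 3 ∨ y = 0) x hx with h | h
        · exact Or.inl (by rw [h])
        · exact Or.inr (by rw [h, hτv2])
      )
    rcases strip_pair' hs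
      (by decide : ∀ y : Fin 4, y ∉ ({0, 2} : Finset (Fin 4)) → y = 1 ∨ y = 3) i hi with hik | hik
    · rw [hik]
      exact ⟨hw.1, hw.2.1⟩
    · rw [hik, hw.2.2]
      exact ⟨hw.1, hw.2.1⟩
  · have hs : s.1 = ({0, 3} : Finset (Fin 4)).image m.πB := repr_self hL
    have hsf1 : (m.tr (m.tB, m.πB 1) s).2.1 = ({1, 2} : Finset (Fin 4)).image m.πQ := by
      show (s.map (m.τ (m.tB, m.πB 1))).1 = _
      rw [m.τB1]
      exact repr_map hs m.πQ c01x23 (by decide)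
    have hsf2 : (m.tr (m.tB, m.πB 2) s).2.1 = ({1, 3} : Finset (Fin 4)).image m.πP := by
      show (s.map (m.τ (m.tB, m.πB 2))).1 = _
      rw [m.τB2]
      exact repr_map hs m.πP c012 (by decide)
    have hτv1 : m.τ (m.tB, m.πB 1) (m.πB 1) = m.πQ 0 := by
      rw [m.τB1]
      simp only [Perm.mul_apply, Perm.inv_apply_self]
      try exact congrArg m.πQ (by decide)
    have hτv2 : m.τ (m.tB, m.πB 2) (m.πB 2) = m.πP 0 := by
      rw [m.τB2]
      simp only [Perm.mul_apply, Perm.inv_apply_self]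
      try exact congrArg m.πP (by decide)
    have hw := m.side_worker (t0 := m.tB) (i1 := m.πB 1) (i2 := m.πB 2) (s := s)
      (fun h => m.hAB (congrArg Prod.fst h).symm) (fun h => absurd (m.πB.injective (congrArg Prod.snd h)) (by decide))
      (fun h => m.hAB (congrArg Prod.fst h).symm) (fun h => absurd (m.πB.injective (congrArg Prod.snd h)) (by decide))
      (strip_not_mem' hs (by decide)) (strip_not_mem' hs (by decide))
      (strip_pair' hs (by decide : ∀ y : Fin 4, y ∉ ({0, 3} : Finset (Fin 4)) → y = 1 ∨ y = 2))
      (by rw [m.ΦB1, m.ΦB2]; exact fun h => m.hPQ h.symm)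
      (strip_not_mem' hsf1 (by decide : (3 : Fin 4) ∉ ({1, 2} : Finset (Fin 4))))
      (by rw [m.ΦB1]; exact m.QPglue)
      (by rw [m.ΦB2])
      (by
        show (s.map (m.τ (m.tB, m.πB 1))).map _ = s.map (m.τ (m.tB, m.πB 2))
        rw [m.τB1, m.τB2, EdgePair.map_map]
        rw [show ((m.πQ * p23 * m.πP⁻¹)⁻¹) * (m.πQ * c01x23 * m.πB⁻¹) = m.πP * (p23⁻¹ * c01x23) * m.πB⁻¹ from by group]
        exact map_transfer hs _ _ _ (by decide))
      (by rw [m.ΦB2]; exact m.hPQglue)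
      (by rw [m.ΦB1])
      (by
        show (s.map (m.τ (m.tB, m.πB 2))).map _ = s.map (m.τ (m.tB, m.πB 1))
        rw [m.τB2, m.τB1, EdgePair.map_map]
        rw [show (m.πQ * p23 * m.πP⁻¹) * (m.πP * c012 * m.πB⁻¹) = m.πQ * (p23 * c012) * m.πB⁻¹ from by group]
        exact map_transfer hs _ _ _ (by decide))
      (by
        intro x hx
        rcases strip_pair' hsf1
          (by decide : ∀ y : Fin 4, y ∉ ({1, 2} : Finset (Fin 4)) → y = 3 ∨ y = 0) x hx with h | h
        · exact Or.inl (by rw [h])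
        · exact Or.inr (by rw [h, hτv1])
      )
      (by
        intro x hx
        rcases strip_pair' hsf2
          (by decide : ∀ y : Fin 4, y ∉ ({1, 3} : Finset (Fin 4)) → y = 2 ∨ y = 0) x hx with h | h
        · exact Or.inl (by rw [h])
        · exact Or.inr (by rw [h, hτv2])
      )
    rcases strip_pair' hs
      (by decide : ∀ y : Fin 4, y ∉ ({0, 3} : Finset (Fin 4)) → y = 1 ∨ y = 2) i hi with hik | hik
    · rw [hik]
      exact ⟨hw.1, hw.2.1⟩
    · rw [hik, hw.2.2]
      exact ⟨hw.1, hw.2.1⟩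

end Move23

end Paper



open Paper

/-- If a single 2-3 or 3-2 move produces a degree one edge, then that edge had
degree two before the move (or was already a degree one edge); in particular no
single 2-3 or 3-2 move converts an edge of degree greater than two into a degree
one edge.  (The central edge created by a 2-3 move is never a degree one edge.) -/
theorem degree_one_comes_from_degree_two
    (T T' : Tri) (m : Move23 T T') (e : T.ModelEdge) (f : T'.ModelEdge)
    (hc : m.edgeCorr e f) :
    (T'.degree (T'.edgeOf f) = 1 →
        T.degree (T.edgeOf e) = 1 ∨ T.degree (T.edgeOf e) = 2) ∧
    (T.degree (T.edgeOf e) = 1 →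
        T'.degree (T'.edgeOf f) = 1 ∨ T'.degree (T'.edgeOf f) = 2) ∧
    T'.degree (T'.edgeOf m.centralEdge) ≠ 1 := by
  obtain ⟨t, s⟩ := e
  obtain ⟨i, hi, hiA, hiB, hf1, hf2⟩ := hc
  have hf : f = m.tr (t, i) s := Prod.ext hf1 hf2
  have main : (T'.degree (T'.edgeOf (m.tr (t, i) s)) = 1 →
      T.degree (T.edgeOf (t, s)) = 1 ∨ T.degree (T.edgeOf (t, s)) = 2) ∧
      (T.degree (T.edgeOf (t, s)) = 1 →
      T'.degree (T'.edgeOf (m.tr (t, i) s)) = 1 ∨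
        T'.degree (T'.edgeOf (m.tr (t, i) s)) = 2) := by
    by_cases htA : t = m.tA
    · subst htA
      by_cases h0 : m.πA 0 ∈ s.1
      · obtain ⟨hno, htwo⟩ := m.sideA h0 hi hiA
        exact ⟨fun h1 => absurd h1 hno, fun h2 => Or.inr (htwo h2)⟩
      · obtain ⟨hno, htwo⟩ := m.eqA h0 hi hiA
        exact ⟨fun h1 => Or.inr (htwo h1), fun h2 => absurd h2 hno⟩
    by_cases htB : t = m.tB
    · subst htB
      by_cases h0 : m.πB 0 ∈ s.1
      · obtain ⟨hno, htwo⟩ := m.sideB h0 hi hiB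
        exact ⟨fun h1 => absurd h1 hno, fun h2 => Or.inr (htwo h2)⟩
      · obtain ⟨hno, htwo⟩ := m.eqB h0 hi hiB
        exact ⟨fun h1 => Or.inr (htwo h1), fun h2 => absurd h2 hno⟩
    · obtain ⟨d1, d2⟩ := m.main_out ⟨htA, htB⟩ s
      have htr : m.tr (t, i) s = ((m.ρ ⟨t, htA, htB⟩).1, s.map (m.μ t)) := by
        show ((m.Φ (t, i)).1, s.map (m.τ (t, i))) = _
        rw [(m.hΦout t ⟨htA, htB⟩ i).1, (m.hΦout t ⟨htA, htB⟩ i).2]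
      rw [htr]
      exact ⟨fun h1 => Or.inl (d1 h1), fun h2 => Or.inl (d2 h2)⟩
  rw [hf]
  exact ⟨main.1, main.2, m.central_deg_ne_one⟩
end

section
/- Let (𝒯_i, 𝒯_{i+1}, …, 𝒯_{j-1}) be a sequence of triangulations in which each is obtained from the previous one by a 2-3 or 3-2 move, and suppose a degree one edge e is present in every triangulation of the sequence. Then the model tetrahedron T incident to e and the unique triangle incident to e are unchanged by every move in the sequence: no 2-3 or 3-2 move performed during the lifetime of the degree one edge alters T. -/
/-!
Formalization framework for triangulations of three-manifolds
(Matveev/Piergallini-style triangulations, following Wheeler,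
"Connectivity of triangulations without degree one edges under 2-3 and 3-2 moves").

A triangulation is a finite family of oriented model tetrahedra together with
orientation-reversing face pairings; no face is glued to itself, faces may be left
unglued (boundary faces).  The face of a model tetrahedron opposite vertex `i` is
labelled `i`; a pairing of face `(t, i)` with face `(t', i')` is recorded together
with the induced simplicial vertex correspondence, extended to a permutation
`σ` of `Fin 4` with `σ i = i'`.  Since all model tetrahedra are identically
oriented, a face pairing is orientation-reversing exactly when `σ` is odd.
-/

namespace Paper

open Equiv

/-- A 2-3 move does not alter the model tetrahedron carrying the model edge `a`:
that tetrahedron is not one of the tetrahedra removed by the move, and it is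
carried, unchanged, to a tetrahedron of the new triangulation which is not one of
the three new tetrahedra, with `a` carried along. -/
def Move23.Untouched {T T' : Tri} (m : Move23 T T')
    (a : T.ModelEdge) (b : T'.ModelEdge) : Prop :=
  ∃ h : a.1 ≠ m.tA ∧ a.1 ≠ m.tB,
    b.1 = (m.ρ ⟨a.1, h⟩).val ∧ b.2 = a.2.map (m.μ a.1) ∧
    b.1 ≠ m.tP ∧ b.1 ≠ m.tQ ∧ b.1 ≠ m.tR

end Paper

open Paper

open Equiv

private lemma deg_one_no_cross (T : Tri) (f : T.ModelEdge)
    (hd : T.degree (T.edgeOf f) = 1)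
    (j : Fin 4) (G : T.ι × Fin 4) (σ : Perm (Fin 4))
    (hj : j ∉ f.2.1) (hg : T.glue (f.1, j) = some (G, σ)) (hne : G.1 ≠ f.1) :
    False := by
  have hadj : T.edgeAdj f (G.1, f.2.map σ) := ⟨j, G, σ, hj, hg, rfl, rfl⟩
  have heq : T.edgeOf (G.1, f.2.map σ) = T.edgeOf f := (Quot.sound hadj).symm
  have hsub := (Nat.card_eq_one_iff_unique.mp hd).1
  have h2 : (⟨f, rfl⟩ : {e : T.ModelEdge // T.edgeOf e = T.edgeOf f}) =
      ⟨(G.1, f.2.map σ), heq⟩ := Subsingleton.elim _ _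
  exact hne (congrArg (fun x => x.1.1) h2).symm

private lemma perm_inv_p23 (πX πY : Perm (Fin 4)) :
    (πY * p23 * πX⁻¹)⁻¹ = πX * p23 * πY⁻¹ := by
  simp [p23, mul_inv_rev, mul_assoc]

private lemma cross_case (T' : Tri) (f : T'.ModelEdge)
    (hd : T'.degree (T'.edgeOf f) = 1)
    (x y : T'.ι) (πX πY : Perm (Fin 4)) (jx : Fin 4) (G : T'.ι × Fin 4)
    (a b : Fin 4) (hxy : y ≠ x) (hGy : G.1 = y)
    (hG : T'.glue (x, πX jx) = some (G, πY * p23 * πX⁻¹))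
    (hft : f.1 = x) (hfs : f.2.1 = {πX a, πX b})
    (hja : jx ≠ a) (hjb : jx ≠ b) : False := by
  refine deg_one_no_cross T' f hd (πX jx) G (πY * p23 * πX⁻¹) ?_ ?_ ?_
  · rw [hfs]
    simp [Finset.mem_insert, πX.injective.eq_iff, hja, hjb]
  · rw [hft]; exact hG
  · rw [hGy, hft]; exact hxy

private lemma mem_case {T T' : Tri} (m' : Move23 T T') (e : T.ModelEdge) (f : T'.ModelEdge)
    (hd : T'.degree (T'.edgeOf f) = 1)
    (i : Fin 4) (x y : T'.ι) (πX πY π c : Perm (Fin 4)) (jx : Fin 4)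
    (G : T'.ι × Fin 4) (j' : Fin 4) (u w a0 m₀ : Fin 4)
    (hf1 : f.1 = (m'.Φ (e.1, i)).1) (hf2 : f.2 = e.2.map (m'.τ (e.1, i)))
    (hse : e.2.1 = {u, w})
    (hΦ : m'.Φ (e.1, i) = (x, j')) (hτ : m'.τ (e.1, i) = πX * c * π⁻¹)
    (hu : π a0 = u) (hw : π m₀ = w)
    (hxy : y ≠ x) (hGy : G.1 = y)
    (hG : T'.glue (x, πX jx) = some (G, πY * p23 * πX⁻¹))
    (hja : jx ≠ c a0) (hjb : jx ≠ c m₀) : False := by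
  refine cross_case T' f hd x y πX πY jx G (c a0) (c m₀) hxy hGy hG ?_ ?_ hja hjb
  · rw [hf1, hΦ]
  · rw [hf2]
    show e.2.1.image _ = _
    rw [hse, hτ, ← hu, ← hw]
    simp [Finset.image_insert, Finset.image_singleton, Equiv.Perm.mul_apply]

private lemma key {T T' : Tri} (e : T.ModelEdge) (f : T'.ModelEdge)
    (hdT : T.degree (T.edgeOf e) = 1) (hdT' : T'.degree (T'.edgeOf f) = 1)
    (m' : Move23 T T') (hc : m'.edgeCorr e f) : m'.Untouched e f := by
  obtain ⟨i, hi, hiA, hiB, hf1, hf2⟩ := hc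
  have gP2 := m'.hPQglue
  have gQ2 := m'.hQRglue
  have gR2 := m'.hRPglue
  have gP3 : T'.glue (m'.tP, m'.πP 3) = some ((m'.tR, m'.πR 2), m'.πR * p23 * m'.πP⁻¹) := by
    have h := T'.glue_symm _ _ _ m'.hRPglue; rwa [perm_inv_p23] at h
  have gQ3 : T'.glue (m'.tQ, m'.πQ 3) = some ((m'.tP, m'.πP 2), m'.πP * p23 * m'.πQ⁻¹) := by
    have h := T'.glue_symm _ _ _ m'.hPQglue; rwa [perm_inv_p23] at h
  have gR3 : T'.glue (m'.tR, m'.πR 3) = some ((m'.tQ, m'.πQ 2), m'.πQ * p23 * m'.πR⁻¹) := by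
    have h := T'.glue_symm _ _ _ m'.hQRglue; rwa [perm_inv_p23] at h
  have gB : T.glue (m'.tB, m'.πB 0) = some ((m'.tA, m'.πA 0), m'.πA * p23 * m'.πB⁻¹) := by
    have h := T.glue_symm _ _ _ m'.hglue; rwa [perm_inv_p23] at h
  have htA : e.1 ≠ m'.tA := by
    intro hA
    by_cases h0 : m'.πA 0 ∈ e.2.1
    · obtain ⟨w, hw0, hse⟩ : ∃ w, m'.πA 0 ≠ w ∧ e.2.1 = {m'.πA 0, w} := by
        rcases Finset.card_eq_two.mp e.2.2 with ⟨a, b, hab, hs⟩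
        rw [hs] at h0
        rcases Finset.mem_insert.mp h0 with h | h
        · exact ⟨b, h ▸ hab, by rw [hs, h]⟩
        · have h' := Finset.mem_singleton.mp h
          exact ⟨a, h' ▸ hab.symm, by rw [hs, h', Finset.pair_comm]⟩
      obtain ⟨m₀, hm⟩ : ∃ z, m'.πA z = w := ⟨m'.πA⁻¹ w, m'.πA.apply_symm_apply w⟩
      obtain ⟨k₀, hk⟩ : ∃ z, m'.πA z = i := ⟨m'.πA⁻¹ i, m'.πA.apply_symm_apply i⟩
      have hk0 : k₀ ≠ 0 := by
        intro h; exact hiA (by rw [hA, ← hk, h])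
      have hm0 : m₀ ≠ 0 := by
        intro h; exact hw0 (by rw [← hm, h])
      have hmk : m₀ ≠ k₀ := by
        intro h
        apply hi
        rw [hse, ← hk, ← hm, h]
        exact Finset.mem_insert_of_mem (Finset.mem_singleton_self _)
      have hΦ1 : ∀ K : Fin 4, K ≠ 0 → m'.πA K = i →
          m'.Φ (e.1, i) = ![(m'.tP, m'.πP 1), (m'.tQ, m'.πQ 1), (m'.tR, m'.πR 1), (m'.tP, m'.πP 1)] K ∧
          m'.τ (e.1, i) = ![1, m'.πQ * m'.πA⁻¹, m'.πR * c132 * m'.πA⁻¹, m'.πP * c123 * m'.πA⁻¹] K := by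
        intro K hK hKi; rw [hA, ← hKi]; exact m'.hΦA K hK
      fin_cases k₀ <;> fin_cases m₀
      · exact (hk0 (by decide)).elim
      · exact (hk0 (by decide)).elim
      · exact (hk0 (by decide)).elim
      · exact (hk0 (by decide)).elim
      -- k₀ = 1
      · exact (hm0 (by decide)).elim
      · exact (hmk (by decide)).elim
      · -- k=1, m=2 : x = tQ, f2={πQ 0, πQ 2}, jx=3, y=tP
        refine mem_case m' e f hdT' i m'.tQ m'.tP m'.πQ m'.πP m'.πA 1 3
          (m'.tP, m'.πP 2) (m'.πQ 1) (m'.πA 0) w 0 2 hf1 hf2 hse ?_ ?_ rfl hm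
          m'.hPQ rfl gQ3 (by decide) (by decide)
        · have h := (hΦ1 1 (by decide) hk).1; simpa using h
        · have h := (hΦ1 1 (by decide) hk).2; rw [mul_one]; simpa using h
      · -- k=1, m=3 : jx=2, y=tR
        refine mem_case m' e f hdT' i m'.tQ m'.tR m'.πQ m'.πR m'.πA 1 2
          (m'.tR, m'.πR 3) (m'.πQ 1) (m'.πA 0) w 0 3 hf1 hf2 hse ?_ ?_ rfl hm
          m'.hQR.symm rfl gQ2 (by decide) (by decide)
        · have h := (hΦ1 1 (by decide) hk).1; simpa using h
        · have h := (hΦ1 1 (by decide) hk).2; rw [mul_one]; simpa using h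
      -- k₀ = 2 : x = tR, c = c132
      · exact (hm0 (by decide)).elim
      · -- k=2, m=1 : b = 3, jx=2, y=tP
        refine mem_case m' e f hdT' i m'.tR m'.tP m'.πR m'.πP m'.πA c132 2
          (m'.tP, m'.πP 3) (m'.πR 1) (m'.πA 0) w 0 1 hf1 hf2 hse ?_ ?_ rfl hm
          m'.hPR rfl gR2 (by decide) (by decide)
        · have h := (hΦ1 2 (by decide) hk).1; simpa using h
        · have h := (hΦ1 2 (by decide) hk).2; simpa using h
      · exact (hmk (by decide)).elim
      · -- k=2, m=3 : b = 2, jx=3, y=tQ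
        refine mem_case m' e f hdT' i m'.tR m'.tQ m'.πR m'.πQ m'.πA c132 3
          (m'.tQ, m'.πQ 2) (m'.πR 1) (m'.πA 0) w 0 3 hf1 hf2 hse ?_ ?_ rfl hm
          m'.hQR rfl gR3 (by decide) (by decide)
        · have h := (hΦ1 2 (by decide) hk).1; simpa using h
        · have h := (hΦ1 2 (by decide) hk).2; simpa using h
      -- k₀ = 3 : x = tP, c = c123
      · exact (hm0 (by decide)).elim
      · -- k=3, m=1 : b = 2, jx=3, y=tR
        refine mem_case m' e f hdT' i m'.tP m'.tR m'.πP m'.πR m'.πA c123 3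
          (m'.tR, m'.πR 2) (m'.πP 1) (m'.πA 0) w 0 1 hf1 hf2 hse ?_ ?_ rfl hm
          m'.hPR.symm rfl gP3 (by decide) (by decide)
        · have h := (hΦ1 3 (by decide) hk).1; simpa using h
        · have h := (hΦ1 3 (by decide) hk).2; simpa using h
      · -- k=3, m=2 : b = 3, jx=2, y=tQ
        refine mem_case m' e f hdT' i m'.tP m'.tQ m'.πP m'.πQ m'.πA c123 2
          (m'.tQ, m'.πQ 3) (m'.πP 1) (m'.πA 0) w 0 2 hf1 hf2 hse ?_ ?_ rfl hm
          m'.hPQ.symm rfl gP2 (by decide) (by decide)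
        · have h := (hΦ1 3 (by decide) hk).1; simpa using h
        · have h := (hΦ1 3 (by decide) hk).2; simpa using h
      · exact (hmk (by decide)).elim
    · exact deg_one_no_cross T e hdT (m'.πA 0) (m'.tB, m'.πB 0) _ h0
        (by rw [hA]; exact m'.hglue) (by rw [hA]; exact m'.hAB.symm)
  have htB : e.1 ≠ m'.tB := by
    intro hB
    by_cases h0 : m'.πB 0 ∈ e.2.1
    · obtain ⟨w, hw0, hse⟩ : ∃ w, m'.πB 0 ≠ w ∧ e.2.1 = {m'.πB 0, w} := by
        rcases Finset.card_eq_two.mp e.2.2 with ⟨a, b, hab, hs⟩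
        rw [hs] at h0
        rcases Finset.mem_insert.mp h0 with h | h
        · exact ⟨b, h ▸ hab, by rw [hs, h]⟩
        · have h' := Finset.mem_singleton.mp h
          exact ⟨a, h' ▸ hab.symm, by rw [hs, h', Finset.pair_comm]⟩
      obtain ⟨m₀, hm⟩ : ∃ z, m'.πB z = w := ⟨m'.πB⁻¹ w, m'.πB.apply_symm_apply w⟩
      obtain ⟨k₀, hk⟩ : ∃ z, m'.πB z = i := ⟨m'.πB⁻¹ i, m'.πB.apply_symm_apply i⟩
      have hk0 : k₀ ≠ 0 := by
        intro h; exact hiB (by rw [hB, ← hk, h])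
      have hm0 : m₀ ≠ 0 := by
        intro h; exact hw0 (by rw [← hm, h])
      have hmk : m₀ ≠ k₀ := by
        intro h
        apply hi
        rw [hse, ← hk, ← hm, h]
        exact Finset.mem_insert_of_mem (Finset.mem_singleton_self _)
      have hΦ1 : ∀ K : Fin 4, K ≠ 0 → m'.πB K = i →
          m'.Φ (e.1, i) = ![(m'.tQ, m'.πQ 0), (m'.tQ, m'.πQ 0), (m'.tP, m'.πP 0), (m'.tR, m'.πR 0)] K ∧
          m'.τ (e.1, i) = ![1, m'.πQ * c01x23 * m'.πB⁻¹, m'.πP * c012 * m'.πB⁻¹, m'.πR * c013 * m'.πB⁻¹] K := by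
        intro K hK hKi; rw [hB, ← hKi]; exact m'.hΦB K hK
      fin_cases k₀ <;> fin_cases m₀
      · exact (hk0 (by decide)).elim
      · exact (hk0 (by decide)).elim
      · exact (hk0 (by decide)).elim
      · exact (hk0 (by decide)).elim
      -- k₀ = 1 : x = tQ, c = c01x23
      · exact (hm0 (by decide)).elim
      · exact (hmk (by decide)).elim
      · -- k=1, m=2 : b = 3, jx=2, y=tR
        refine mem_case m' e f hdT' i m'.tQ m'.tR m'.πQ m'.πR m'.πB c01x23 2
          (m'.tR, m'.πR 3) (m'.πQ 0) (m'.πB 0) w 0 2 hf1 hf2 hse ?_ ?_ rfl hm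
          m'.hQR.symm rfl gQ2 (by decide) (by decide)
        · have h := (hΦ1 1 (by decide) hk).1; simpa using h
        · have h := (hΦ1 1 (by decide) hk).2; simpa using h
      · -- k=1, m=3 : b = 2, jx=3, y=tP
        refine mem_case m' e f hdT' i m'.tQ m'.tP m'.πQ m'.πP m'.πB c01x23 3
          (m'.tP, m'.πP 2) (m'.πQ 0) (m'.πB 0) w 0 3 hf1 hf2 hse ?_ ?_ rfl hm
          m'.hPQ rfl gQ3 (by decide) (by decide)
        · have h := (hΦ1 1 (by decide) hk).1; simpa using h
        · have h := (hΦ1 1 (by decide) hk).2; simpa using h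
      -- k₀ = 2 : x = tP, c = c012
      · exact (hm0 (by decide)).elim
      · -- k=2, m=1 : b = 2, jx=3, y=tR
        refine mem_case m' e f hdT' i m'.tP m'.tR m'.πP m'.πR m'.πB c012 3
          (m'.tR, m'.πR 2) (m'.πP 0) (m'.πB 0) w 0 1 hf1 hf2 hse ?_ ?_ rfl hm
          m'.hPR.symm rfl gP3 (by decide) (by decide)
        · have h := (hΦ1 2 (by decide) hk).1; simpa using h
        · have h := (hΦ1 2 (by decide) hk).2; simpa using h
      · exact (hmk (by decide)).elim
      · -- k=2, m=3 : b = 3, jx=2, y=tQ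
        refine mem_case m' e f hdT' i m'.tP m'.tQ m'.πP m'.πQ m'.πB c012 2
          (m'.tQ, m'.πQ 3) (m'.πP 0) (m'.πB 0) w 0 3 hf1 hf2 hse ?_ ?_ rfl hm
          m'.hPQ.symm rfl gP2 (by decide) (by decide)
        · have h := (hΦ1 2 (by decide) hk).1; simpa using h
        · have h := (hΦ1 2 (by decide) hk).2; simpa using h
      -- k₀ = 3 : x = tR, c = c013
      · exact (hm0 (by decide)).elim
      · -- k=3, m=1 : b = 3, jx=2, y=tP
        refine mem_case m' e f hdT' i m'.tR m'.tP m'.πR m'.πP m'.πB c013 2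
          (m'.tP, m'.πP 3) (m'.πR 0) (m'.πB 0) w 0 1 hf1 hf2 hse ?_ ?_ rfl hm
          m'.hPR rfl gR2 (by decide) (by decide)
        · have h := (hΦ1 3 (by decide) hk).1; simpa using h
        · have h := (hΦ1 3 (by decide) hk).2; simpa using h
      · -- k=3, m=2 : b = 2, jx=3, y=tQ
        refine mem_case m' e f hdT' i m'.tR m'.tQ m'.πR m'.πQ m'.πB c013 3
          (m'.tQ, m'.πQ 2) (m'.πR 0) (m'.πB 0) w 0 2 hf1 hf2 hse ?_ ?_ rfl hm
          m'.hQR rfl gR3 (by decide) (by decide)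
        · have h := (hΦ1 3 (by decide) hk).1; simpa using h
        · have h := (hΦ1 3 (by decide) hk).2; simpa using h
      · exact (hmk (by decide)).elim
    · exact deg_one_no_cross T e hdT (m'.πB 0) (m'.tA, m'.πA 0) _ h0
        (by rw [hB]; exact gB) (by rw [hB]; exact m'.hAB)
  have hout := m'.hΦout e.1 ⟨htA, htB⟩ i
  refine ⟨⟨htA, htB⟩, ?_, ?_, ?_, ?_, ?_⟩
  · rw [hf1, hout.1]
  · rw [hf2, hout.2]
  · rw [hf1, hout.1]; exact (m'.ρ ⟨e.1, ⟨htA, htB⟩⟩).2.1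
  · rw [hf1, hout.1]; exact (m'.ρ ⟨e.1, ⟨htA, htB⟩⟩).2.2.1
  · rw [hf1, hout.1]; exact (m'.ρ ⟨e.1, ⟨htA, htB⟩⟩).2.2.2

/-- If a degree one edge is present in every triangulation of a sequence of 2-3
and 3-2 moves, then the model tetrahedron incident to it (and hence the unique
triangle incident to it) is unchanged by every move of the sequence: no 2-3 or
3-2 move performed during the lifetime of a degree one edge alters its
tetrahedron. -/
theorem degree_one_edge_tetrahedron_untouched
    (N : ℕ) (seq : Fin (N + 1) → Tri) (e : ∀ k, (seq k).ModelEdge)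
    (hdeg : ∀ k, (seq k).degree ((seq k).edgeOf (e k)) = 1) (k : Fin N) :
    (∀ m : Move23 (seq k.castSucc) (seq k.succ),
        m.edgeCorr (e k.castSucc) (e k.succ) →
        m.Untouched (e k.castSucc) (e k.succ)) ∧
    (∀ m : Move23 (seq k.succ) (seq k.castSucc),
        m.edgeCorr (e k.succ) (e k.castSucc) →
        m.Untouched (e k.succ) (e k.castSucc)) :=
  ⟨fun m hc => key _ _ (hdeg k.castSucc) (hdeg k.succ) m hc,
   fun m hc => key _ _ (hdeg k.succ) (hdeg k.castSucc) m hc⟩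
end
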